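/- arXiv:math/0609385 — 6 statements merged into one kernel-verified Lean document; each statement's English description precedes it below -/
import Mathlib

section
/- Let Ψ be a random analytic function on a disc B(w, r) ⊆ ℂ (i.e., a measurable map into the space of analytic functions on B(w,r)). Then for every s > 0 there exists a constant C > 0 (depending only on s) such that E[sup_{z ∈ B(w, r/2)} |Ψ(z)|^s] ≤ C · sup_{z ∈ B(w, r)} E|Ψ(z)|^s. -/
open MeasureTheory Metric ENNReal

open Set
open scoped Real

lemma circleMV {F : ℂ → ℂ} (hF : Continuous F) {c : ℂ} {t : ℝ} (ht : 0 < t)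
    (hd : DifferentiableOn ℂ F (ball c t)) :
    2 * π * ‖F c‖ ≤ ∫ θ in (0:ℝ)..(2*π), ‖F (circleMap c t θ)‖ := by
  have hdc : DiffContOnCl ℂ F (ball c t) := ⟨hd, hF.continuousOn⟩
  have hC := hdc.circleIntegral_sub_inv_smul (mem_ball_self ht)
  have h1 : ‖(2 * (π:ℂ) * Complex.I) • F c‖ = 2 * π * ‖F c‖ := by
    rw [norm_smul]
    simp [Real.pi_pos.le, abs_of_nonneg]
  calc 2 * π * ‖F c‖ = ‖∮ z in C(c, t), (z - c)⁻¹ • F z‖ := by rw [hC, h1]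
    _ ≤ ∫ θ in (0:ℝ)..(2*π), ‖deriv (circleMap c t) θ • (circleMap c t θ - c)⁻¹ • F (circleMap c t θ)‖ := by
        apply intervalIntegral.norm_integral_le_integral_norm
        positivity
    _ = ∫ θ in (0:ℝ)..(2*π), ‖F (circleMap c t θ)‖ := by
        apply intervalIntegral.integral_congr
        intro θ _
        simp only []
        rw [norm_smul, norm_smul, deriv_circleMap]
        simp only [norm_mul, norm_inv, norm_circleMap_zero, Complex.norm_I, mul_one,
          circleMap_sub_center, map_inv₀]
        rw [abs_of_pos ht]
        field_simp

lemma cplus_symm_eq (c : ℂ) (p : ℝ × ℝ) :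
    c + Complex.polarCoord.symm p = circleMap c p.1 p.2 := by
  rw [Complex.polarCoord_symm_apply, circleMap, Complex.exp_mul_I]
  push_cast
  ring

lemma areaMV {F : ℂ → ℂ} (hF : Continuous F) {c : ℂ} {ρ : ℝ} (hρ : 0 < ρ)
    (hd : DifferentiableOn ℂ F (ball c ρ)) :
    π * ρ^2 * ‖F c‖ ≤ ∫ y in ball c ρ, ‖F y‖ := by
  -- bound for F on the closed ball
  obtain ⟨Cb, hCb⟩ := (isCompact_closedBall c ρ).exists_bound_of_continuousOn hF.continuousOn
  set g : ℂ → ℝ := (ball c ρ).indicator (fun y => ‖F y‖) with hg_def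
  have hg_nonneg : ∀ y, 0 ≤ g y := fun y => by
    by_cases h : y ∈ ball c ρ <;> simp [hg_def, Set.indicator_of_mem, Set.indicator_of_notMem, h, norm_nonneg]
  have hg_bound : ∀ y, g y ≤ max Cb 0 := fun y => by
    by_cases h : y ∈ ball c ρ
    · rw [hg_def, Set.indicator_of_mem h]
      exact le_max_of_le_left (hCb y (ball_subset_closedBall h))
    · rw [hg_def, Set.indicator_of_notMem h]; exact le_max_right _ _
  have hgmeas : Measurable g := (hF.norm.measurable).indicator measurableSet_ball
  set f0 : ℂ → ℝ := fun y => g (c + y) with hf0_def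
  have hf0_eq : ∫ y, f0 y = ∫ y in ball c ρ, ‖F y‖ := by
    rw [hf0_def]
    rw [integral_add_left_eq_self g c]
    rw [hg_def, integral_indicator measurableSet_ball]
  have hch := Complex.integral_comp_polarCoord_symm f0
  set h : ℝ × ℝ → ℝ := fun p => p.1 • f0 (Complex.polarCoord.symm p) with hh_def
  set T' : Set (ℝ × ℝ) := Ioo (0:ℝ) ρ ×ˢ Ioo (-π) π with hT'_def
  have hT'sub : T' ⊆ polarCoord.target := by
    rw [polarCoord_target]
    exact Set.prod_mono Ioo_subset_Ioi_self (subset_refl _)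
  have hT'meas : MeasurableSet T' := measurableSet_Ioo.prod measurableSet_Ioo
  have hsymm_cont : Continuous fun p : ℝ × ℝ => Complex.polarCoord.symm p := by
    simp only [Complex.polarCoord_symm_apply]
    fun_prop
  have hmeas_h : Measurable h := by
    apply Measurable.smul measurable_fst
    exact hgmeas.comp ((continuous_const.add hsymm_cont).measurable)
  have hzero : ∀ p ∈ polarCoord.target \ T', h p = 0 := by
    rintro ⟨t, θ⟩ ⟨hpT, hpT'⟩
    rw [polarCoord_target] at hpT
    obtain ⟨ht1, ht2⟩ := hpT
    simp only [hT'_def, Set.mem_prod, Set.mem_Ioo, not_and, not_lt] at hpT'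
    have htρ : ρ ≤ t := by
      by_contra hc
      push_neg at hc
      exact absurd (hpT' ⟨ht1, hc⟩ ht2.1) (not_le.2 ht2.2)
    have : c + Complex.polarCoord.symm (t, θ) ∉ ball c ρ := by
      rw [mem_ball, dist_eq_norm, add_sub_cancel_left,
        Complex.norm_polarCoord_symm]
      simp only [not_lt]
      calc ρ ≤ t := htρ
        _ ≤ |t| := le_abs_self t
    simp only [hh_def, hf0_def, hg_def, smul_eq_mul]
    rw [Set.indicator_of_notMem this, mul_zero]
  have hTT' : ∫ p in polarCoord.target, h p = ∫ p in T', h p := by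
    rw [setIntegral_congr_fun polarCoord.open_target.measurableSet
      (show Set.EqOn h (T'.indicator h) polarCoord.target from fun p hp => by
        by_cases hmem : p ∈ T'
        · rw [Set.indicator_of_mem hmem]
        · rw [Set.indicator_of_notMem hmem]; exact hzero p ⟨hp, hmem⟩)]
    rw [setIntegral_indicator hT'meas, Set.inter_eq_self_of_subset_right hT'sub]
  have hvolT' : volume T' ≠ ⊤ := by
    rw [hT'_def, Measure.volume_eq_prod, Measure.prod_prod]
    exact ENNReal.mul_ne_top (by simp) (by simp)
  have hIntT' : IntegrableOn h T' := by
    apply Measure.integrableOn_of_bounded hvolT' hmeas_h.aestronglyMeasurable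
      (M := ρ * max Cb 0)
    filter_upwards [ae_restrict_mem hT'meas] with p hp
    obtain ⟨hp1, _⟩ := hp
    have h1 : |p.1| ≤ ρ := by rw [abs_of_pos hp1.1]; exact hp1.2.le
    calc ‖h p‖ = |p.1| * |f0 (Complex.polarCoord.symm p)| := by
          rw [hh_def]; simp [abs_mul]
      _ ≤ ρ * max Cb 0 := by
          apply mul_le_mul h1 _ (abs_nonneg _) hρ.le
          rw [abs_of_nonneg (hg_nonneg _)]
          exact hg_bound _
  have hprodInt : Integrable h ((volume.restrict (Ioo (0:ℝ) ρ)).prod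
      (volume.restrict (Ioo (-π) π))) := by
    rw [Measure.prod_restrict]
    rw [IntegrableOn, Measure.volume_eq_prod] at hIntT'
    exact hIntT'
  have hFub : ∫ p in T', h p = ∫ t in Ioo (0:ℝ) ρ, ∫ θ in Ioo (-π) π, h (t, θ) := by
    rw [hT'_def, Measure.volume_eq_prod, setIntegral_prod _ ?_]
    rw [IntegrableOn, Measure.volume_eq_prod] at hIntT'
    exact hIntT'
  have hinner : ∀ t ∈ Ioo (0:ℝ) ρ,
      2 * π * ‖F c‖ * t ≤ ∫ θ in Ioo (-π) π, h (t, θ) := by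
    intro t ht
    have hmemb : ∀ θ : ℝ, circleMap c t θ ∈ ball c ρ := fun θ =>
      lt_of_le_of_lt (mem_closedBall.1 (circleMap_mem_closedBall c ht.1.le θ)) ht.2
    have heq : ∀ θ : ℝ, h (t, θ) = t * ‖F (circleMap c t θ)‖ := by
      intro θ
      rw [hh_def]
      simp only [smul_eq_mul]
      congr 1
      rw [hf0_def]
      simp only []
      rw [cplus_symm_eq c (t, θ), hg_def, Set.indicator_of_mem (hmemb θ)]
    simp only [heq]
    rw [integral_const_mul]
    have hper : Function.Periodic (fun θ => ‖F (circleMap c t θ)‖) (2 * π) :=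
      fun θ => by simp [periodic_circleMap c t θ]
    have hIoo : ∫ θ in Ioo (-π) π, ‖F (circleMap c t θ)‖
        = ∫ θ in (0:ℝ)..(2*π), ‖F (circleMap c t θ)‖ := by
      rw [← MeasureTheory.integral_Ioc_eq_integral_Ioo,
        ← intervalIntegral.integral_of_le (by linarith [Real.pi_pos] : -π ≤ π)]
      have := hper.intervalIntegral_add_eq (-π) 0
      simp only [zero_add] at this
      rw [show -π + 2*π = π by ring] at this
      exact this
    rw [hIoo, mul_comm (2 * π * ‖F c‖) t]
    apply mul_le_mul_of_nonneg_left _ ht.1.le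
    exact circleMV hF ht.1 (hd.mono (ball_subset_ball ht.2.le))
  have houter : ∫ t in Ioo (0:ℝ) ρ, 2 * π * ‖F c‖ * t
      ≤ ∫ t in Ioo (0:ℝ) ρ, ∫ θ in Ioo (-π) π, h (t, θ) := by
    apply setIntegral_mono_on
    · exact ((continuous_const.mul continuous_id).integrableOn_Icc (a := (0:ℝ)) (b := ρ)).mono_set
        Ioo_subset_Icc_self
    · exact hprodInt.integral_prod_left
    · exact measurableSet_Ioo
    · exact hinner
  have hid : ∫ t in Ioo (0:ℝ) ρ, t = ρ^2/2 := by
    rw [← MeasureTheory.integral_Ioc_eq_integral_Ioo,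
      ← intervalIntegral.integral_of_le hρ.le, integral_id]
    ring
  calc π * ρ^2 * ‖F c‖ = ∫ t in Ioo (0:ℝ) ρ, 2 * π * ‖F c‖ * t := by
        rw [integral_const_mul, hid]; ring
    _ ≤ ∫ t in Ioo (0:ℝ) ρ, ∫ θ in Ioo (-π) π, h (t, θ) := houter
    _ = ∫ p in T', h p := hFub.symm
    _ = ∫ p in polarCoord.target, h p := hTT'.symm
    _ = ∫ y, f0 y := hch
    _ = ∫ y in ball c ρ, ‖F y‖ := hf0_eq

lemma core {s : ℝ} (hs : 0 < s) (hs1 : s ≤ 1) {w : ℂ} {R r₁ : ℝ} (hr₁ : 0 < r₁)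
    (hRr : r₁ < R) {F : ℂ → ℂ} (hF : Continuous F) (hd : DifferentiableOn ℂ F (ball w R))
    {z : ℂ} (hz : z ∈ ball w r₁) :
    ‖F z‖ ^ s ≤ (4:ℝ) ^ s⁻¹ / π / (R - r₁)^2 * ∫ y in ball w R, ‖F y‖ ^ s := by
  have hR : 0 < R := hr₁.trans hRr
  have hpi := Real.pi_pos
  set G : ℂ → ℝ := fun y => (R - dist y w)^2 * ‖F y‖ ^ s with hG_def
  have hFs_cont : Continuous fun y => ‖F y‖ ^ s :=
    hF.norm.rpow_const fun y => Or.inr hs.le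
  have hGcont : Continuous G := by
    apply Continuous.mul _ hFs_cont
    exact (continuous_const.sub (continuous_id.dist continuous_const)).pow 2
  obtain ⟨z₀, hz₀mem, hz₀max⟩ := (isCompact_closedBall w R).exists_isMaxOn
    ⟨w, mem_closedBall_self hR.le⟩ hGcont.continuousOn
  set A : ℝ := ∫ y in ball w R, ‖F y‖ ^ s with hA_def
  have hA0 : 0 ≤ A := setIntegral_nonneg measurableSet_ball
    fun y _ => Real.rpow_nonneg (norm_nonneg _) s
  have hIntA : IntegrableOn (fun y => ‖F y‖ ^ s) (ball w R) :=
    (hFs_cont.continuousOn.integrableOn_compact (isCompact_closedBall w R)).mono_set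
      ball_subset_closedBall
  set M : ℝ := G z₀ with hM_def
  have hKpos : (0:ℝ) < (4:ℝ) ^ s⁻¹ / π := by positivity
  have key : M ≤ (4:ℝ) ^ s⁻¹ / π * A := by
    rcases le_or_gt M 0 with hM0 | hM
    · exact hM0.trans (by positivity)
    -- M > 0 case
    have hFz₀pos : 0 < ‖F z₀‖ ^ s := by
      by_contra hcon
      push_neg at hcon
      have : M ≤ 0 := by
        rw [hM_def, hG_def]
        exact mul_nonpos_of_nonneg_of_nonpos (by positivity) hcon
      linarith
    have hdist : dist z₀ w < R := by
      rcases lt_or_eq_of_le (mem_closedBall.1 hz₀mem) with h | h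
      · exact h
      · exfalso
        have : M = 0 := by simp only [hM_def, hG_def]; rw [h]; ring
        linarith
    set d : ℝ := R - dist z₀ w with hd_def
    have hd0 : 0 < d := by simp [hd_def]; linarith
    set ρ : ℝ := d / 2 with hρ_def
    have hρ0 : 0 < ρ := by positivity
    have hball : ball z₀ ρ ⊆ ball w R := fun y hy => by
      rw [mem_ball] at hy ⊢
      have := dist_triangle y z₀ w
      simp only [hρ_def, hd_def] at hy ⊢
      linarith
    have hub : ∀ y ∈ ball z₀ ρ, ‖F y‖ ^ s ≤ M / ρ^2 := by
      intro y hy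
      have h1 : ρ ≤ R - dist y w := by
        have := dist_triangle y z₀ w
        rw [mem_ball] at hy
        simp only [hρ_def, hd_def] at hy ⊢
        linarith
      have h2 : G y ≤ M := hz₀max (ball_subset_closedBall (hball hy))
      have h3 : ρ^2 * ‖F y‖ ^ s ≤ G y := by
        rw [hG_def]
        apply mul_le_mul_of_nonneg_right _ (Real.rpow_nonneg (norm_nonneg _) s)
        exact pow_le_pow_left₀ hρ0.le h1 2
      rw [le_div_iff₀ (by positivity)]
      nlinarith
    -- mean value + bound
    have hMV := areaMV hF hρ0 (hd.mono hball)
    set q : ℝ := (1 - s)/s with hq_def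
    have hq0 : 0 ≤ q := by
      apply div_nonneg _ hs.le; linarith
    have hIntF : IntegrableOn (fun y => ‖F y‖) (ball z₀ ρ) :=
      (hF.norm.continuousOn.integrableOn_compact (isCompact_closedBall z₀ ρ)).mono_set
        ball_subset_closedBall
    have hIntFs : IntegrableOn (fun y => (M/ρ^2) ^ q * ‖F y‖ ^ s) (ball z₀ ρ) :=
      (hIntA.mono_set hball).const_mul _
    have hstepB : ∫ y in ball z₀ ρ, ‖F y‖ ≤ (M/ρ^2) ^ q * ∫ y in ball z₀ ρ, ‖F y‖ ^ s := by
      rw [← integral_const_mul]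
      apply setIntegral_mono_on hIntF hIntFs measurableSet_ball
      intro y hy
      have hxy : (0:ℝ) ≤ ‖F y‖ := norm_nonneg _
      have e1 : ‖F y‖ = ‖F y‖ ^ s * ‖F y‖ ^ (1 - s) := by
        rw [← Real.rpow_add' hxy (by norm_num : s + (1 - s) ≠ 0)]
        simp
      have e2 : ‖F y‖ ^ (1 - s) = (‖F y‖ ^ s) ^ q := by
        rw [← Real.rpow_mul hxy]
        congr 1
        rw [hq_def]; field_simp
      have e3 : (‖F y‖ ^ s) ^ q ≤ (M/ρ^2) ^ q :=
        Real.rpow_le_rpow (Real.rpow_nonneg hxy s) (hub y hy) hq0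
      calc ‖F y‖ = ‖F y‖ ^ s * ‖F y‖ ^ (1 - s) := e1
        _ = ‖F y‖ ^ s * (‖F y‖ ^ s) ^ q := by rw [e2]
        _ ≤ ‖F y‖ ^ s * (M/ρ^2) ^ q :=
            mul_le_mul_of_nonneg_left e3 (Real.rpow_nonneg hxy s)
        _ = (M/ρ^2) ^ q * ‖F y‖ ^ s := by ring
    have hstepC : ∫ y in ball z₀ ρ, ‖F y‖ ^ s ≤ A := by
      apply setIntegral_mono_set hIntA
      · filter_upwards with y using Real.rpow_nonneg (norm_nonneg _) s
      · exact HasSubset.Subset.eventuallyLE hball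
    have hchain : π * ρ^2 * ‖F z₀‖ ≤ (M/ρ^2) ^ q * A := by
      calc π * ρ^2 * ‖F z₀‖ ≤ ∫ y in ball z₀ ρ, ‖F y‖ := hMV
        _ ≤ (M/ρ^2) ^ q * ∫ y in ball z₀ ρ, ‖F y‖ ^ s := hstepB
        _ ≤ (M/ρ^2) ^ q * A :=
            mul_le_mul_of_nonneg_left hstepC (Real.rpow_nonneg (by positivity) q)
    -- now the rpow algebra
    have hu : (0:ℝ) < ρ^2 := by positivity
    have hFz₀ : 0 < ‖F z₀‖ := by
      by_contra hcon
      push_neg at hcon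
      have : ‖F z₀‖ = 0 := le_antisymm hcon (norm_nonneg _)
      rw [this] at hFz₀pos
      rw [Real.zero_rpow hs.ne'] at hFz₀pos
      exact lt_irrefl _ hFz₀pos
    -- raise to power s
    have hpow : (π * ρ^2 * ‖F z₀‖) ^ s ≤ ((M/ρ^2) ^ q * A) ^ s :=
      Real.rpow_le_rpow (by positivity) hchain hs.le
    have hL : (π * ρ^2 * ‖F z₀‖) ^ s = π ^ s * (ρ^2) ^ s * ‖F z₀‖ ^ s := by
      rw [Real.mul_rpow (by positivity) (norm_nonneg _), Real.mul_rpow hpi.le hu.le]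
    have hMρ : (0:ℝ) < M / ρ^2 := by positivity
    have hRhs : ((M/ρ^2) ^ q * A) ^ s = (M/ρ^2) ^ (1 - s) * A ^ s := by
      rw [Real.mul_rpow (Real.rpow_nonneg (by positivity) q) hA0,
        ← Real.rpow_mul hMρ.le]
      congr 2
      rw [hq_def]
      field_simp
    have hMd : M = 4 * ρ^2 * ‖F z₀‖ ^ s := by
      simp only [hM_def, hG_def]
      have hh : R - dist z₀ w = 2 * ρ := by rw [hρ_def]; ring
      rw [hh]; ring
    have hFzs_eq : ‖F z₀‖ ^ s = M / (4 * ρ^2) := by rw [hMd]; field_simp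
    rw [hL, hRhs, hFzs_eq] at hpow
    -- hpow : π^s * (ρ²)^s * (M/(4ρ²)) ≤ (M/ρ²)^(1-s) * A^s
    have hdiv : (M/ρ^2) ^ (1-s) = M ^ (1-s) / (ρ^2) ^ (1-s) :=
      Real.div_rpow hM.le hu.le (1-s)
    have e5 : (ρ^2:ℝ) ^ s * (ρ^2) ^ (1-s) = ρ^2 := by
      rw [← Real.rpow_add hu]; norm_num
    have e6 : M ^ s * M ^ (1-s) = M := by
      rw [← Real.rpow_add hM]; norm_num
    have hP : (0:ℝ) < (ρ^2) ^ s := Real.rpow_pos_of_pos hu s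
    have hQ : (0:ℝ) < (ρ^2) ^ (1-s) := Real.rpow_pos_of_pos hu (1-s)
    have hN : (0:ℝ) < M ^ s := Real.rpow_pos_of_pos hM s
    have hN' : (0:ℝ) < M ^ (1-s) := Real.rpow_pos_of_pos hM (1-s)
    have hπs : (0:ℝ) < π ^ s := Real.rpow_pos_of_pos hpi s
    have h1 : π^s * (ρ^2)^s * (M/(4*ρ^2))
        = (π^s * M^s/4) * (M^(1-s) / (ρ^2)^(1-s)) := by
      have hrw : M / (4*ρ^2) = M^s * M^(1-s) / (4 * ((ρ^2)^s * (ρ^2)^(1-s))) := by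
        rw [e6, e5]
      rw [hrw]
      field_simp
    rw [hdiv] at hpow
    rw [h1] at hpow
    have hc : (0:ℝ) < M^(1-s) / (ρ^2)^(1-s) := by positivity
    have step : π^s * M^s / 4 ≤ A ^ s := by
      have := (mul_le_mul_iff_of_pos_right hc).mp (by
        calc (π^s * M^s/4) * (M^(1-s) / (ρ^2)^(1-s)) ≤ M^(1-s)/(ρ^2)^(1-s) * A^s := hpow
          _ = A ^ s * (M^(1-s)/(ρ^2)^(1-s)) := by ring)
      exact this
    have hMs : M ^ s ≤ 4 / π^s * A ^ s := by
      rw [div_mul_eq_mul_div, le_div_iff₀ hπs]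
      linarith [step]
    have hfin : M ≤ (4 / π^s * A^s) ^ s⁻¹ := by
      have hM_eq : M = (M ^ s) ^ s⁻¹ := by
        rw [← Real.rpow_mul hM.le, mul_inv_cancel₀ hs.ne', Real.rpow_one]
      rw [hM_eq]
      exact Real.rpow_le_rpow (Real.rpow_nonneg hM.le s) hMs (by positivity)
    calc M ≤ (4 / π^s * A^s) ^ s⁻¹ := hfin
      _ = (4:ℝ) ^ s⁻¹ / π * A := by
          rw [Real.mul_rpow (by positivity) (Real.rpow_nonneg hA0 s),
            Real.div_rpow (by norm_num) (by positivity),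
            ← Real.rpow_mul hpi.le, mul_inv_cancel₀ hs.ne', Real.rpow_one,
            ← Real.rpow_mul hA0, mul_inv_cancel₀ hs.ne', Real.rpow_one]
  -- conclude
  have hGz : (R - r₁)^2 * ‖F z‖ ^ s ≤ M := by
    have h1 : G z ≤ M := hz₀max (ball_subset_closedBall ((ball_subset_ball hRr.le) hz))
    have h2 : (R - r₁)^2 * ‖F z‖ ^ s ≤ G z := by
      rw [hG_def]
      apply mul_le_mul_of_nonneg_right _ (Real.rpow_nonneg (norm_nonneg _) s)
      apply pow_le_pow_left₀ (by linarith) _ 2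
      rw [mem_ball] at hz
      linarith
    linarith
  have hden : (0:ℝ) < (R - r₁)^2 := by nlinarith
  rw [div_mul_eq_mul_div, div_mul_eq_mul_div, le_div_iff₀ hden, mul_comm]
  calc (R - r₁)^2 * ‖F z‖ ^ s ≤ M := hGz
    _ ≤ (4:ℝ) ^ s⁻¹ / π * A := key
    _ = (4:ℝ) ^ s⁻¹ * A / π := by ring

lemma detlem (s : ℝ) (hs : 0 < s) : ∃ K : ℝ, 0 < K ∧ ∀ (w : ℂ) (R r₁ : ℝ), 0 < r₁ → r₁ < R →
    ∀ F : ℂ → ℂ, Continuous F → DifferentiableOn ℂ F (ball w R) → ∀ z ∈ ball w r₁,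
    ‖F z‖ ^ s ≤ K / (R - r₁)^2 * ∫ y in ball w R, ‖F y‖ ^ s := by
  set m : ℕ := max 1 ⌈s⌉₊ with hm_def
  have hm1 : 1 ≤ m := le_max_left _ _
  have hm0 : (0:ℝ) < (m:ℝ) := by exact_mod_cast hm1
  have hsm : s ≤ (m:ℝ) := by
    calc s ≤ (⌈s⌉₊ : ℝ) := Nat.le_ceil s
      _ ≤ (m:ℝ) := by exact_mod_cast le_max_right 1 ⌈s⌉₊
  set t : ℝ := s / m with ht_def
  have ht : 0 < t := by positivity
  have ht1 : t ≤ 1 := by rw [ht_def, div_le_one hm0]; exact hsm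
  have hmt : (m:ℝ) * t = s := by rw [ht_def]; field_simp
  refine ⟨(4:ℝ) ^ t⁻¹ / π, by positivity, ?_⟩
  intro w R r₁ h1 h2 F hF hd z hz
  have hnorm : ∀ y : ℂ, ‖(F y) ^ m‖ ^ t = ‖F y‖ ^ s := by
    intro y
    rw [norm_pow, ← Real.rpow_natCast ‖F y‖ m, ← Real.rpow_mul (norm_nonneg _), hmt]
  have hcore := core ht ht1 h1 h2 (F := fun y => (F y) ^ m) (hF.pow m)
    (fun y hy => ((hd y hy).pow m)) hz
  rw [hnorm z] at hcore
  calc ‖F z‖ ^ s ≤ (4:ℝ) ^ t⁻¹ / π / (R - r₁)^2 * ∫ y in ball w R, ‖(F y) ^ m‖ ^ t := hcore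
    _ = (4:ℝ) ^ t⁻¹ / π / (R - r₁)^2 * ∫ y in ball w R, ‖F y‖ ^ s := by
        congr 1
        exact integral_congr_ae (Filter.Eventually.of_forall fun y => hnorm y)

/-- Lemma 7.1: for every `s > 0` there is a constant `C > 0`, depending
only on `s`, such that for every random analytic function `Ψ` on a disc `B(w, r)`,
`E[sup_{z ∈ B(w, r/2)} |Ψ z|^s] ≤ C · sup_{z ∈ B(w, r)} E|Ψ z|^s`. -/
theorem stmt5 (s : ℝ) (hs : 0 < s) :
    ∃ C : ℝ≥0∞, 0 < C ∧ C < ⊤ ∧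
      ∀ (Ω : Type) (_ : MeasurableSpace Ω) (P : Measure Ω), IsProbabilityMeasure P →
        ∀ (w : ℂ) (r : ℝ), 0 < r →
          ∀ Ψ : Ω → ℂ → ℂ,
            (∀ ω, DifferentiableOn ℂ (Ψ ω) (ball w r)) →
            (∀ z ∈ ball w r, Measurable fun ω => Ψ ω z) →
            ∫⁻ ω, ⨆ z ∈ ball w (r / 2), (‖Ψ ω z‖₊ : ℝ≥0∞) ^ s ∂P ≤
              C * ⨆ z ∈ ball w r, ∫⁻ ω, (‖Ψ ω z‖₊ : ℝ≥0∞) ^ s ∂P := by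
  obtain ⟨K, hK, hdet⟩ := detlem s hs
  refine ⟨ENNReal.ofReal (16 * K) * NNReal.pi, ?_, ?_, ?_⟩
  · apply ENNReal.mul_pos
    · simp only [ne_eq, ENNReal.ofReal_eq_zero, not_le]; positivity
    · exact ENNReal.coe_ne_zero.2 NNReal.pi_ne_zero
  · exact ENNReal.mul_lt_top ENNReal.ofReal_lt_top (by simp)
  intro Ω mΩ P hP w r hr Ψ hdiff hmeas
  set R : ℝ := 3 * r / 4 with hR_def
  have hR : 0 < R := by rw [hR_def]; linarith
  have hRr : R < r := by rw [hR_def]; linarith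
  have hr₁R : r / 2 < R := by rw [hR_def]; linarith
  -- radial projection onto closedBall w R
  set proj : ℂ → ℂ := fun z => w + (R / max R ‖z - w‖) • (z - w) with hproj_def
  have hden_pos : ∀ z : ℂ, 0 < max R ‖z - w‖ := fun z => lt_max_of_lt_left hR
  have hproj_cont : Continuous proj := by
    apply continuous_const.add
    refine Continuous.smul (f := fun z : ℂ => R / max R ‖z - w‖) ?_ (continuous_id.sub continuous_const)
    exact continuous_const.div (continuous_const.max ((continuous_id.sub continuous_const).norm))
      fun z => (hden_pos z).ne'
  have hproj_id : ∀ z ∈ closedBall w R, proj z = z := by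
    intro z hz
    rw [mem_closedBall, dist_eq_norm] at hz
    rw [hproj_def]
    simp only [max_eq_left hz, div_self hR.ne', one_smul]
    ring
  have hproj_mem : ∀ z : ℂ, proj z ∈ closedBall w R := by
    intro z
    rw [mem_closedBall, dist_eq_norm]
    have : w + (R / max R ‖z - w‖) • (z - w) - w = (R / max R ‖z - w‖) • (z - w) := by ring_nf
    rw [hproj_def]
    simp only []
    rw [this, norm_smul, norm_div]
    simp only [Real.norm_eq_abs, abs_of_pos hR, abs_of_pos (hden_pos z)]
    rw [div_mul_eq_mul_div, div_le_iff₀ (hden_pos z)]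
    exact mul_le_mul_of_nonneg_left (le_max_right _ _) hR.le
  have hproj_ball : ∀ z : ℂ, proj z ∈ ball w r :=
    fun z => (closedBall_subset_ball hRr) (hproj_mem z)
  set F : Ω → ℂ → ℂ := fun ω z => Ψ ω (proj z) with hF_def
  have hF_cont : ∀ ω, Continuous (F ω) := fun ω =>
    ((hdiff ω).continuousOn.comp_continuous hproj_cont hproj_ball)
  have hF_diff : ∀ ω, DifferentiableOn ℂ (F ω) (ball w R) := fun ω => by
    apply DifferentiableOn.congr ((hdiff ω).mono (ball_subset_ball hRr.le))
    intro z hz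
    rw [hF_def]
    simp only []
    rw [hproj_id z (ball_subset_closedBall hz)]
  have hF_meas : ∀ z : ℂ, Measurable fun ω => F ω z := fun z =>
    hmeas (proj z) (hproj_ball z)
  have hjoint : Measurable (Function.uncurry fun z ω => F ω z) :=
    measurable_uncurry_of_continuous_of_measurable
      (fun ω => hF_cont ω) hF_meas
  have hg_meas : Measurable fun p : Ω × ℂ => (‖F p.1 p.2‖₊ : ℝ≥0∞) ^ s := by
    have h1 : Measurable fun p : Ω × ℂ => F p.1 p.2 := by
      have := hjoint.comp (measurable_swap (α := Ω) (β := ℂ))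
      exact this
    exact (ENNReal.continuous_rpow_const.measurable).comp
      (h1.nnnorm.coe_nnreal_ennreal)
  set S : ℝ≥0∞ := ⨆ z ∈ ball w r, ∫⁻ ω, (‖Ψ ω z‖₊ : ℝ≥0∞) ^ s ∂P with hS_def
  set K' : ℝ := K / (R - r/2)^2 with hK'_def
  have hRr2 : 0 < R - r/2 := by linarith
  have hK'pos : 0 < K' := div_pos hK (by positivity)
  have hIntFs : ∀ ω, IntegrableOn (fun y => ‖F ω y‖ ^ s) (ball w R) volume := fun ω =>
    (((hF_cont ω).norm.rpow_const fun y => Or.inr hs.le).continuousOn.integrableOn_compact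
      (isCompact_closedBall w R)).mono_set ball_subset_closedBall
  have hptω : ∀ ω, (⨆ z ∈ ball w (r/2), (‖Ψ ω z‖₊ : ℝ≥0∞) ^ s)
      ≤ ENNReal.ofReal K' * ∫⁻ y in ball w R, (‖F ω y‖₊ : ℝ≥0∞) ^ s := by
    intro ω
    have hA_eq : ENNReal.ofReal (∫ y in ball w R, ‖F ω y‖ ^ s)
        = ∫⁻ y in ball w R, (‖F ω y‖₊ : ℝ≥0∞) ^ s := by
      rw [MeasureTheory.ofReal_integral_eq_lintegral_ofReal (hIntFs ω)
        (Filter.Eventually.of_forall fun y => Real.rpow_nonneg (norm_nonneg _) s)]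
      apply lintegral_congr
      intro y
      rw [← enorm_eq_nnnorm, ← ofReal_norm, ← ENNReal.ofReal_rpow_of_nonneg (norm_nonneg _) hs.le]
    apply iSup₂_le
    intro z hz
    have hzF : Ψ ω z = F ω z := by
      rw [hF_def]
      simp only []
      rw [hproj_id z (ball_subset_closedBall ((ball_subset_ball hr₁R.le) hz))]
    have hb := hdet w R (r/2) (by linarith) hr₁R (F ω) (hF_cont ω) (hF_diff ω) z hz
    calc (‖Ψ ω z‖₊ : ℝ≥0∞) ^ s = ENNReal.ofReal (‖F ω z‖ ^ s) := by
          rw [hzF, ← enorm_eq_nnnorm, ← ofReal_norm,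
            ← ENNReal.ofReal_rpow_of_nonneg (norm_nonneg _) hs.le]
      _ ≤ ENNReal.ofReal (K' * ∫ y in ball w R, ‖F ω y‖ ^ s) :=
          ENNReal.ofReal_le_ofReal hb
      _ = ENNReal.ofReal K' * ENNReal.ofReal (∫ y in ball w R, ‖F ω y‖ ^ s) :=
          ENNReal.ofReal_mul hK'pos.le
      _ = ENNReal.ofReal K' * ∫⁻ y in ball w R, (‖F ω y‖₊ : ℝ≥0∞) ^ s := by rw [hA_eq]
  have hCbound : ENNReal.ofReal K' * volume (ball w R)
      ≤ ENNReal.ofReal (16 * K) * NNReal.pi := by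
    rw [Complex.volume_ball, ← mul_assoc]
    apply mul_le_mul_left
    rw [← ENNReal.ofReal_pow hR.le, ← ENNReal.ofReal_mul hK'pos.le]
    apply ENNReal.ofReal_le_ofReal
    have he : K' * R^2 = 9 * K := by
      rw [hK'_def, hR_def]
      have h4 : 3 * r / 4 - r / 2 = r / 4 := by ring
      rw [h4]
      field_simp
      ring
    rw [he]
    linarith
  calc ∫⁻ ω, ⨆ z ∈ ball w (r/2), (‖Ψ ω z‖₊ : ℝ≥0∞) ^ s ∂P
      ≤ ∫⁻ ω, (ENNReal.ofReal K' * ∫⁻ y in ball w R, (‖F ω y‖₊ : ℝ≥0∞) ^ s) ∂P :=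
        lintegral_mono hptω
    _ = ENNReal.ofReal K' * ∫⁻ ω, (∫⁻ y in ball w R, (‖F ω y‖₊ : ℝ≥0∞) ^ s) ∂P :=
        lintegral_const_mul' _ _ ENNReal.ofReal_ne_top
    _ = ENNReal.ofReal K' * ∫⁻ y in ball w R, ∫⁻ ω, (‖F ω y‖₊ : ℝ≥0∞) ^ s ∂P := by
        rw [lintegral_lintegral_swap hg_meas.aemeasurable]
    _ ≤ ENNReal.ofReal K' * ∫⁻ _y in ball w R, S := by
        apply mul_le_mul_right
        apply lintegral_mono
        intro y
        exact le_biSup (fun z => ∫⁻ ω, (‖Ψ ω z‖₊ : ℝ≥0∞) ^ s ∂P) (hproj_ball y)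
    _ = ENNReal.ofReal K' * (S * volume (ball w R)) := by rw [setLIntegral_const]
    _ = (ENNReal.ofReal K' * volume (ball w R)) * S := by ring
    _ ≤ (ENNReal.ofReal (16 * K) * NNReal.pi) * S := mul_le_mul_left hCbound S
end

section
/- Let m ≥ 2, t ≥ 0, and F(θ) := (t!/(m·(mt+m-1)!)) ∏_{i=t}^{mt+m-2} (θ + i). Then for λ₁ : (0,∞) → (-t,∞) the inverse of F, the function β ↦ β·λ₁'(β) satisfies β·λ₁'(β) = (∑_{i=t}^{mt+m-2} 1/(λ₁(β)+i))^{-1}, is strictly increasing in β, and increases from 0 to ∞ as β ranges over (0, ∞). Consequently, for every α > 0 the equation β·λ₁'(β) = α has a unique solution β(α) > 0, and β(α) is strictly increasing in α. -/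
open Filter Topology

section Aux

variable {t n : ℕ} {C : ℝ}

private noncomputable def auxS (t n : ℕ) (l : ℝ) : ℝ :=
  ∑ i ∈ Finset.Icc t n, (l + i)⁻¹

private lemma aux_pos {l : ℝ} (hl : -(t:ℝ) < l) : ∀ i ∈ Finset.Icc t n, (0:ℝ) < l + i := by
  intro i hi
  have : (t:ℝ) ≤ i := by exact_mod_cast (Finset.mem_Icc.1 hi).1
  linarith

private lemma auxS_pos (htn : t ≤ n) {l : ℝ} (hl : -(t:ℝ) < l) : 0 < auxS t n l := by
  refine Finset.sum_pos (fun i hi => inv_pos.2 (aux_pos hl i hi)) ?_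
  exact ⟨t, Finset.mem_Icc.2 ⟨le_rfl, htn⟩⟩

private lemma auxF_pos (hC : 0 < C) {l : ℝ} (hl : -(t:ℝ) < l) :
    0 < C * ∏ i ∈ Finset.Icc t n, (l + i) :=
  mul_pos hC (Finset.prod_pos (aux_pos hl))

private lemma aux_hasDerivAt (l : ℝ) (hl : -(t:ℝ) < l) :
    HasDerivAt (fun θ : ℝ => C * ∏ i ∈ Finset.Icc t n, (θ + i))
      ((C * ∏ i ∈ Finset.Icc t n, (l + i)) * auxS t n l) l := by
  have hpos := aux_pos (n := n) hl
  have h1 : HasDerivAt (fun θ : ℝ => ∏ i ∈ Finset.Icc t n, (θ + i))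
      (∑ i ∈ Finset.Icc t n, (∏ j ∈ (Finset.Icc t n).erase i, (l + j)) • (1:ℝ)) l :=
    HasDerivAt.fun_finsetProd (fun i _ => (hasDerivAt_id l).add_const _)
  have h2 := h1.const_mul C
  convert h2 using 1
  · rfl
  · rfl
  rw [auxS, Finset.mul_sum, Finset.mul_sum]
  refine Finset.sum_congr rfl fun i hi => ?_
  have hne : l + (i:ℝ) ≠ 0 := ne_of_gt (hpos i hi)
  rw [smul_eq_mul, mul_one, mul_assoc, ← Finset.mul_prod_erase _ _ hi,
    mul_comm (l + (i:ℝ)), mul_inv_cancel_right₀ hne]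

private lemma auxS_anti (htn : t ≤ n) {l₁ l₂ : ℝ} (h1 : -(t:ℝ) < l₁) (h12 : l₁ < l₂) :
    auxS t n l₂ < auxS t n l₁ := by
  refine Finset.sum_lt_sum_of_nonempty ⟨t, Finset.mem_Icc.2 ⟨le_rfl, htn⟩⟩ ?_
  intro i hi
  have hp := aux_pos (n := n) h1 i hi
  exact inv_strictAnti₀ hp (by linarith)

end Aux

/-- with `F(θ) = (t!/(m·(mt+m-1)!)) ∏_{i=t}^{mt+m-2} (θ+i)` and `λ₁`
its inverse on `(0,∞)`, the function `β ↦ β·λ₁'(β)` equals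
`(∑_{i=t}^{mt+m-2} 1/(λ₁(β)+i))⁻¹`, is strictly increasing, and increases from
`0` to `∞`; hence for each `α > 0` the equation `β·λ₁'(β) = α` has a unique
solution `β(α) > 0`, which is strictly increasing in `α`. -/
theorem stmt9 (m t : ℕ) (hm : 2 ≤ m)
    (F : ℝ → ℝ)
    (hF : ∀ θ : ℝ, F θ =
      (Nat.factorial t : ℝ) / (m * Nat.factorial (m * t + m - 1)) *
        ∏ i ∈ Finset.Icc t (m * t + m - 2), (θ + i))
    (lam : ℝ → ℝ)
    (hlam : ∀ β : ℝ, 0 < β → -(t : ℝ) < lam β ∧ F (lam β) = β)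
    (hlam' : ∀ l : ℝ, -(t : ℝ) < l → lam (F l) = l) :
    (∀ β : ℝ, 0 < β →
        β * deriv lam β = (∑ i ∈ Finset.Icc t (m * t + m - 2), 1 / (lam β + i))⁻¹) ∧
      StrictMonoOn (fun β => β * deriv lam β) (Set.Ioi 0) ∧
      Tendsto (fun β => β * deriv lam β) (𝓝[>] (0 : ℝ)) (𝓝 0) ∧
      Tendsto (fun β => β * deriv lam β) atTop atTop ∧
      (∀ α : ℝ, 0 < α → ∃! β : ℝ, 0 < β ∧ β * deriv lam β = α) ∧
      (∀ α₁ α₂ β₁ β₂ : ℝ, 0 < α₁ → α₁ < α₂ →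
        0 < β₁ → β₁ * deriv lam β₁ = α₁ →
        0 < β₂ → β₂ * deriv lam β₂ = α₂ → β₁ < β₂) := by
  set n := m * t + m - 2 with hn
  set C : ℝ := (Nat.factorial t : ℝ) / (m * Nat.factorial (m * t + m - 1)) with hC
  have hCpos : 0 < C := by
    apply div_pos
    · exact_mod_cast Nat.factorial_pos t
    · have hm0 : (0:ℝ) < m := by exact_mod_cast (by omega : 0 < m)
      exact mul_pos hm0 (by exact_mod_cast Nat.factorial_pos _)
  have htn : t ≤ n := by
    have : 2 * t + 2 ≤ m * t + m := by nlinarith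
    omega
  set S : ℝ → ℝ := auxS t n with hSdef
  -- F positive and derivative on (-t, ∞)
  have hFpos : ∀ l : ℝ, -(t:ℝ) < l → 0 < F l := by
    intro l hl; rw [hF]; exact auxF_pos hCpos hl
  have hFderiv : ∀ l : ℝ, -(t:ℝ) < l → HasDerivAt F (F l * S l) l := by
    intro l hl
    have := aux_hasDerivAt (C := C) (t := t) (n := n) l hl
    rw [← hF l] at this
    exact HasDerivAt.congr_of_eventuallyEq this
      (Filter.Eventually.of_forall fun θ => hF θ)
  have hDpos : ∀ l : ℝ, -(t:ℝ) < l → 0 < F l * S l := fun l hl =>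
    mul_pos (hFpos l hl) (auxS_pos htn hl)
  -- F strictly monotone on Ioi (-t)
  have hFmono : StrictMonoOn F (Set.Ioi (-(t:ℝ))) := by
    refine strictMonoOn_of_deriv_pos (convex_Ioi _) ?_ ?_
    · intro l hl
      exact (hFderiv l hl).differentiableAt.continuousAt.continuousWithinAt
    · intro l hl
      rw [interior_Ioi] at hl
      rw [(hFderiv l hl).deriv]
      exact hDpos l hl
  -- lam strictly monotone on Ioi 0
  have hlmono : StrictMonoOn lam (Set.Ioi (0:ℝ)) := by
    intro b1 h1 b2 h2 h12
    rcases lt_trichotomy (lam b1) (lam b2) with h | h | h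
    · exact h
    · exfalso
      have := (hlam b1 h1).2
      rw [h, (hlam b2 h2).2] at this
      exact absurd this (ne_of_lt h12).symm
    · exfalso
      have := hFmono (hlam b2 h2).1 (hlam b1 h1).1 h
      rw [(hlam b1 h1).2, (hlam b2 h2).2] at this
      linarith
  -- image of lam covers Ioi (-t)
  have himg : Set.Ioi (-(t:ℝ)) ⊆ lam '' Set.Ioi (0:ℝ) := by
    intro l hl
    exact ⟨F l, hFpos l hl, hlam' l hl⟩
  -- continuity of lam
  have hlcont : ∀ β : ℝ, 0 < β → ContinuousAt lam β := by
    intro β hβ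
    refine hlmono.continuousAt_of_image_mem_nhds (Ioi_mem_nhds hβ) ?_
    exact mem_of_superset (Ioi_mem_nhds (hlam β hβ).1) himg
  -- derivative of lam
  have hlderiv : ∀ β : ℝ, 0 < β →
      HasDerivAt lam (F (lam β) * S (lam β))⁻¹ β := by
    intro β hβ
    refine HasDerivAt.of_local_left_inverse (hlcont β hβ)
      (hFderiv (lam β) (hlam β hβ).1) (ne_of_gt (hDpos (lam β) (hlam β hβ).1)) ?_
    filter_upwards [Ioi_mem_nhds hβ] with y hy
    exact (hlam y hy).2
  -- the key formula
  have hkey : ∀ β : ℝ, 0 < β → β * deriv lam β = (S (lam β))⁻¹ := by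
    intro β hβ
    rw [(hlderiv β hβ).deriv, (hlam β hβ).2, mul_inv]
    rw [← mul_assoc, mul_inv_cancel₀ (ne_of_gt hβ), one_mul]
  have goal1 : ∀ β : ℝ, 0 < β →
      β * deriv lam β = (∑ i ∈ Finset.Icc t n, 1 / (lam β + i))⁻¹ := by
    intro β hβ
    rw [hkey β hβ]
    simp only [one_div, hSdef, auxS]
  -- strict monotonicity of G
  have goal2 : StrictMonoOn (fun β => β * deriv lam β) (Set.Ioi (0:ℝ)) := by
    intro b1 h1 b2 h2 h12
    simp only [Set.mem_Ioi] at h1 h2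
    simp only [hkey b1 h1, hkey b2 h2]
    have hl1 := (hlam b1 h1).1
    have hl2 := (hlam b2 h2).1
    have hlt := hlmono h1 h2 h12
    exact inv_strictAnti₀ (auxS_pos htn hl2) (auxS_anti htn hl1 hlt)
  -- tendsto 0 at 0+
  have hlam_zero : Tendsto (fun β => lam β + t) (𝓝[>] (0:ℝ)) (𝓝[>] (0:ℝ)) := by
    rw [tendsto_nhdsWithin_iff]
    constructor
    · rw [tendsto_order]
      constructor
      · intro a ha
        filter_upwards [self_mem_nhdsWithin] with β hβ
        have := (hlam β hβ).1
        have : (0:ℝ) < lam β + t := by linarith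
        linarith
      · intro a ha
        have hla : -(t:ℝ) < -(t:ℝ) + a := by linarith
        have hFla : 0 < F (-(t:ℝ) + a) := hFpos _ hla
        filter_upwards [Ioo_mem_nhdsGT_of_mem ⟨le_refl (0:ℝ), hFla⟩] with β hβ
        have h1 : lam β < lam (F (-(t:ℝ) + a)) :=
          hlmono hβ.1 hFla hβ.2
        rw [hlam' _ hla] at h1
        linarith
    · filter_upwards [self_mem_nhdsWithin] with β hβ
      have := (hlam β hβ).1
      simpa using by linarith
  have hSlam_top : Tendsto (fun β => S (lam β)) (𝓝[>] (0:ℝ)) atTop := by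
    refine tendsto_atTop_mono' _ ?_ (tendsto_inv_nhdsGT_zero.comp hlam_zero)
    filter_upwards [self_mem_nhdsWithin] with β hβ
    have hl := (hlam β hβ).1
    have : (lam β + t)⁻¹ ≤ S (lam β) := by
      refine Finset.single_le_sum (f := fun i : ℕ => (lam β + i)⁻¹)
        (fun i hi => le_of_lt (inv_pos.2 (aux_pos hl i hi)))
        (Finset.mem_Icc.2 ⟨le_rfl, htn⟩)
    simpa using this
  have goal3 : Tendsto (fun β => β * deriv lam β) (𝓝[>] (0:ℝ)) (𝓝 0) := by
    refine Tendsto.congr' ?_ hSlam_top.inv_tendsto_atTop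
    filter_upwards [self_mem_nhdsWithin] with β hβ
    exact (hkey β hβ).symm
  -- tendsto atTop
  have hlam_top : Tendsto lam atTop atTop := by
    rw [tendsto_atTop]
    intro M
    set l0 : ℝ := max M (-(t:ℝ) + 1) with hl0
    have hl0t : -(t:ℝ) < l0 := lt_of_lt_of_le (by linarith) (le_max_right _ _)
    have hFl0 : 0 < F l0 := hFpos _ hl0t
    filter_upwards [eventually_gt_atTop (F l0)] with β hβ
    have hβ0 : 0 < β := lt_trans hFl0 hβ
    have h1 : lam (F l0) < lam β := hlmono hFl0 hβ0 hβ
    rw [hlam' _ hl0t] at h1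
    exact le_of_lt (lt_of_le_of_lt (le_max_left _ _) h1)
  have hSlam_zero : Tendsto (fun β => S (lam β)) atTop (𝓝[>] (0:ℝ)) := by
    rw [tendsto_nhdsWithin_iff]
    constructor
    · have hS0 : Tendsto S atTop (𝓝 0) := by
        have : Tendsto (fun l : ℝ => ∑ i ∈ Finset.Icc t n, (l + i)⁻¹) atTop
            (𝓝 (∑ i ∈ Finset.Icc t n, (0:ℝ))) := by
          refine tendsto_finset_sum _ fun i _ => ?_
          exact tendsto_inv_atTop_zero.comp (tendsto_atTop_add_const_right _ _ tendsto_id)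
        simpa [hSdef, show auxS t n = fun l : ℝ => ∑ i ∈ Finset.Icc t n, (l + i)⁻¹ from funext fun l => rfl] using this
      exact hS0.comp hlam_top
    · filter_upwards [hlam_top.eventually (eventually_gt_atTop (-(t:ℝ)))] with β hβ
      exact auxS_pos htn hβ
  have goal4 : Tendsto (fun β => β * deriv lam β) atTop atTop := by
    refine Tendsto.congr' ?_ (tendsto_inv_nhdsGT_zero.comp hSlam_zero)
    filter_upwards [eventually_gt_atTop (0:ℝ)] with β hβ
    exact (hkey β hβ).symm
  -- existence and uniqueness
  have goal5 : ∀ α : ℝ, 0 < α → ∃! β : ℝ, 0 < β ∧ β * deriv lam β = α := by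
    intro α hα
    obtain ⟨β₁, hβ₁lt, hβ₁pos⟩ :=
      (goal3.eventually (eventually_lt_nhds hα)).and self_mem_nhdsWithin |>.exists
    obtain ⟨β₂, hβ₂gt, hβ₂big⟩ :=
      ((goal4.eventually (eventually_gt_atTop α)).and (eventually_gt_atTop β₁)).exists
    have hβ₁pos' : (0:ℝ) < β₁ := hβ₁pos
    have hβ₂pos : (0:ℝ) < β₂ := lt_trans hβ₁pos' hβ₂big
    have hcont : ContinuousOn (fun β => β * deriv lam β) (Set.Icc β₁ β₂) := by
      have hc2 : ContinuousOn (fun β => (S (lam β))⁻¹) (Set.Icc β₁ β₂) := by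
        intro β hβ
        have hβ0 : 0 < β := lt_of_lt_of_le hβ₁pos' hβ.1
        have hl := (hlam β hβ0).1
        have hSc : ContinuousAt S (lam β) := by
          have h2 : Tendsto (fun x : ℝ => ∑ i ∈ Finset.Icc t n, (x + i)⁻¹)
              (𝓝 (lam β)) (𝓝 (∑ i ∈ Finset.Icc t n, (lam β + i)⁻¹)) := by
            refine tendsto_finset_sum _ fun i hi => ?_
            exact ((continuous_id.add continuous_const).continuousAt).inv₀
              (ne_of_gt (aux_pos hl i hi))
          simpa [hSdef, show auxS t n = fun l : ℝ => ∑ i ∈ Finset.Icc t n, (l + i)⁻¹ from funext fun l => rfl, ContinuousAt] using h2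
        exact ((hSc.comp (hlcont β hβ0)).inv₀
          (ne_of_gt (auxS_pos htn hl))).continuousWithinAt
      refine hc2.congr fun β hβ => ?_
      exact hkey β (lt_of_lt_of_le hβ₁pos' hβ.1)
    have hmem : α ∈ Set.Icc (β₁ * deriv lam β₁) (β₂ * deriv lam β₂) :=
      ⟨le_of_lt hβ₁lt, le_of_lt hβ₂gt⟩
    obtain ⟨β, hβmem, hβeq⟩ := intermediate_value_Icc (le_of_lt hβ₂big) hcont hmem
    refine ⟨β, ⟨lt_of_lt_of_le hβ₁pos' hβmem.1, hβeq⟩, ?_⟩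
    intro γ ⟨hγpos, hγeq⟩
    have hβpos : (0:ℝ) < β := lt_of_lt_of_le hβ₁pos' hβmem.1
    have hβeq' : β * deriv lam β = α := hβeq
    rcases lt_trichotomy γ β with h | h | h
    · have hh : γ * deriv lam γ < β * deriv lam β :=
        goal2 (Set.mem_Ioi.2 hγpos) (Set.mem_Ioi.2 hβpos) h
      rw [hγeq, hβeq'] at hh; exact absurd hh (lt_irrefl α)
    · exact h
    · have hh : β * deriv lam β < γ * deriv lam γ :=
        goal2 (Set.mem_Ioi.2 hβpos) (Set.mem_Ioi.2 hγpos) h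
      rw [hγeq, hβeq'] at hh; exact absurd hh (lt_irrefl α)
  have goal6 : ∀ α₁ α₂ β₁ β₂ : ℝ, 0 < α₁ → α₁ < α₂ →
      0 < β₁ → β₁ * deriv lam β₁ = α₁ →
      0 < β₂ → β₂ * deriv lam β₂ = α₂ → β₁ < β₂ := by
    intro α₁ α₂ β₁ β₂ _ h12 hb1 he1 hb2 he2
    rcases lt_trichotomy β₁ β₂ with h | h | h
    · exact h
    · exfalso; rw [h, he2] at he1; linarith
    · exfalso
      have := goal2 (Set.mem_Ioi.2 hb2) (Set.mem_Ioi.2 hb1) h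
      simp only [he1, he2] at this
      linarith
  exact ⟨goal1, goal2, goal3, goal4, goal5, goal6⟩
end

section
/- Let m ≥ 2, t ≥ 0 and F(θ) := (t!/(m·(mt+m-1)!)) ∏_{i=t}^{mt+m-2}(θ+i). Define q(λ) := F(2λ-1)/F(λ)² for λ > (1-t)/2. Then the derivative of log q(λ) = log F(2λ-1) - 2 log F(λ) equals ∑_{i=t}^{mt+m-2} (2/(2λ-1+i) - 2/(λ+i)), which is strictly positive for (1-t)/2 < λ < 1 and strictly negative for λ > 1; hence q is strictly increasing on ((1-t)/2, 1] and strictly decreasing on [1, ∞). -/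
open Real

/-- with `F(θ) = (t!/(m·(mt+m-1)!)) ∏_{i=t}^{mt+m-2} (θ+i)` and
`q(λ) = F(2λ-1)/F(λ)²` for `λ > (1-t)/2`, the derivative of
`log q(λ) = log F(2λ-1) - 2 log F(λ)` equals
`∑_{i=t}^{mt+m-2} (2/(2λ-1+i) - 2/(λ+i))`, which is positive for
`(1-t)/2 < λ < 1` and negative for `λ > 1`; hence `q` is strictly increasing on
`((1-t)/2, 1]` and strictly decreasing on `[1, ∞)`. -/
theorem stmt10 (m t : ℕ) (hm : 2 ≤ m)
    (F : ℝ → ℝ)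
    (hF : ∀ θ : ℝ, F θ =
      (Nat.factorial t : ℝ) / (m * Nat.factorial (m * t + m - 1)) *
        ∏ i ∈ Finset.Icc t (m * t + m - 2), (θ + i))
    (q : ℝ → ℝ) (hq : ∀ l : ℝ, q l = F (2 * l - 1) / (F l) ^ 2) :
    (∀ l : ℝ, (1 - (t : ℝ)) / 2 < l →
        deriv (fun x => Real.log (F (2 * x - 1)) - 2 * Real.log (F x)) l =
          ∑ i ∈ Finset.Icc t (m * t + m - 2), (2 / (2 * l - 1 + i) - 2 / (l + i))) ∧
      (∀ l : ℝ, (1 - (t : ℝ)) / 2 < l → l < 1 →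
        0 < ∑ i ∈ Finset.Icc t (m * t + m - 2), (2 / (2 * l - 1 + i) - 2 / (l + i))) ∧
      (∀ l : ℝ, 1 < l →
        ∑ i ∈ Finset.Icc t (m * t + m - 2), (2 / (2 * l - 1 + i) - 2 / (l + i)) < 0) ∧
      StrictMonoOn q (Set.Ioc ((1 - (t : ℝ)) / 2) 1) ∧
      StrictAntiOn q (Set.Ici 1) := by
  set a : ℝ := (1 - (t : ℝ)) / 2 with ha
  set S := Finset.Icc t (m * t + m - 2) with hSdef
  set c : ℝ := (Nat.factorial t : ℝ) / (m * Nat.factorial (m * t + m - 1)) with hc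
  have hmpos : (0:ℝ) < m := by positivity
  have hcpos : 0 < c := by
    rw [hc]
    have h1 : (0:ℝ) < Nat.factorial t := by positivity
    have h2 : (0:ℝ) < Nat.factorial (m * t + m - 1) := by positivity
    positivity
  have ht0 : (0:ℝ) ≤ t := Nat.cast_nonneg t
  have ha1 : a < 1 := by rw [ha]; linarith
  -- positivity of shifted factors
  have hpos1 : ∀ l : ℝ, a < l → ∀ i ∈ S, 0 < l + (i:ℝ) := by
    intro l hl i hi
    have hti : (t:ℝ) ≤ i := by
      exact_mod_cast (Finset.mem_Icc.mp hi).1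
    rw [ha] at hl; linarith
  have hpos2 : ∀ l : ℝ, a < l → ∀ i ∈ S, 0 < 2 * l - 1 + (i:ℝ) := by
    intro l hl i hi
    have hti : (t:ℝ) ≤ i := by
      exact_mod_cast (Finset.mem_Icc.mp hi).1
    rw [ha] at hl; linarith
  have hFlpos : ∀ l : ℝ, a < l → 0 < F l := by
    intro l hl
    rw [hF l]
    exact mul_pos hcpos (Finset.prod_pos (fun i hi => hpos1 l hl i hi))
  have hF2pos : ∀ l : ℝ, a < l → 0 < F (2 * l - 1) := by
    intro l hl
    rw [hF _]
    exact mul_pos hcpos (Finset.prod_pos (fun i hi => hpos2 l hl i hi))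
  -- the derivative
  have hderiv : ∀ l : ℝ, a < l → HasDerivAt
      (fun x => Real.log (F (2 * x - 1)) - 2 * Real.log (F x))
      (∑ i ∈ S, (2 / (2 * l - 1 + i) - 2 / (l + i))) l := by
    intro l hl
    have hg : HasDerivAt
        (fun x => (Real.log c + ∑ i ∈ S, Real.log (2 * x - 1 + i)) -
          2 * (Real.log c + ∑ i ∈ S, Real.log (x + i)))
        (∑ i ∈ S, (2 / (2 * l - 1 + i) - 2 / (l + i))) l := by
      have h1 : HasDerivAt (fun x => Real.log c + ∑ i ∈ S, Real.log (2 * x - 1 + i))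
          (∑ i ∈ S, 2 / (2 * l - 1 + i)) l := by
        have hterm : ∀ i ∈ S, HasDerivAt (fun x : ℝ => Real.log (2 * x - 1 + (i:ℝ)))
            (2 / (2 * l - 1 + (i:ℝ))) l := by
          intro i hi
          have hlin : HasDerivAt (fun x : ℝ => 2 * x - 1 + (i:ℝ)) 2 l := by
            simpa using (((hasDerivAt_id l).const_mul 2).sub_const 1).add_const (i:ℝ)
          exact hlin.log (ne_of_gt (hpos2 l hl i hi))
        simpa using ((HasDerivAt.sum hterm).const_add (Real.log c))
      have h2 : HasDerivAt (fun x => Real.log c + ∑ i ∈ S, Real.log (x + i))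
          (∑ i ∈ S, 1 / (l + i)) l := by
        have hterm : ∀ i ∈ S, HasDerivAt (fun x : ℝ => Real.log (x + (i:ℝ)))
            (1 / (l + (i:ℝ))) l := by
          intro i hi
          have hlin : HasDerivAt (fun x : ℝ => x + (i:ℝ)) 1 l := (hasDerivAt_id l).add_const _
          simpa using hlin.log (ne_of_gt (hpos1 l hl i hi))
        simpa using ((HasDerivAt.sum hterm).const_add (Real.log c))
      have := h1.sub (h2.const_mul 2)
      refine HasDerivAt.congr_deriv this ?_
      rw [Finset.sum_sub_distrib, Finset.mul_sum]
      congr 1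
      exact Finset.sum_congr rfl fun i _ => by ring
    refine hg.congr_of_eventuallyEq ?_
    filter_upwards [Ioi_mem_nhds hl] with x hx
    have hx' : a < x := hx
    have e1 : Real.log (F (2 * x - 1)) = Real.log c + ∑ i ∈ S, Real.log (2 * x - 1 + i) := by
      rw [hF, Real.log_mul (ne_of_gt hcpos)
        (ne_of_gt (Finset.prod_pos (fun i hi => hpos2 x hx' i hi))),
        Real.log_prod]
      intro i hi; exact ne_of_gt (hpos2 x hx' i hi)
    have e2 : Real.log (F x) = Real.log c + ∑ i ∈ S, Real.log (x + i) := by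
      rw [hF, Real.log_mul (ne_of_gt hcpos)
        (ne_of_gt (Finset.prod_pos (fun i hi => hpos1 x hx' i hi))),
        Real.log_prod]
      intro i hi; exact ne_of_gt (hpos1 x hx' i hi)
    rw [e1, e2]
  -- nonemptiness
  have hSne : S.Nonempty := by
    rw [hSdef]
    refine ⟨t, Finset.mem_Icc.mpr ⟨le_refl t, ?_⟩⟩
    have : 2 * t ≤ m * t := Nat.mul_le_mul_right t hm
    omega
  -- positivity of the sum
  have hsumpos : ∀ l : ℝ, a < l → l < 1 →
      0 < ∑ i ∈ S, (2 / (2 * l - 1 + i) - 2 / (l + i)) := by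
    intro l hl hl1
    refine Finset.sum_pos (fun i hi => ?_) hSne
    have p1 := hpos1 l hl i hi
    have p2 := hpos2 l hl i hi
    have : 2 / (l + i) < 2 / (2 * l - 1 + i) := by
      apply div_lt_div_of_pos_left (by norm_num) p2 (by linarith)
    linarith
  have hsumneg : ∀ l : ℝ, 1 < l →
      ∑ i ∈ S, (2 / (2 * l - 1 + i) - 2 / (l + i)) < 0 := by
    intro l hl
    have hal : a < l := by linarith
    refine Finset.sum_neg (fun i hi => ?_) hSne
    have p1 := hpos1 l hal i hi
    have p2 := hpos2 l hal i hi
    have : 2 / (2 * l - 1 + i) < 2 / (l + i) := by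
      apply div_lt_div_of_pos_left (by norm_num) p1 (by linarith)
    linarith
  -- q = exp ∘ f
  have hqexp : ∀ l : ℝ, a < l →
      q l = Real.exp (Real.log (F (2 * l - 1)) - 2 * Real.log (F l)) := by
    intro l hl
    rw [hq, Real.exp_sub, Real.exp_log (hF2pos l hl)]
    congr 1
    rw [show (2:ℝ) * Real.log (F l) = Real.log (F l ^ 2) by
      rw [Real.log_pow]; push_cast; ring]
    rw [Real.exp_log (pow_pos (hFlpos l hl) 2)]
  set f : ℝ → ℝ := fun x => Real.log (F (2 * x - 1)) - 2 * Real.log (F x) with hf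
  have hcontOn : ∀ s : Set ℝ, s ⊆ Set.Ioi a → ContinuousOn f s := by
    intro s hs
    exact fun x hx => ((hderiv x (hs hx)).differentiableAt.continuousAt).continuousWithinAt
  have hmono : StrictMonoOn f (Set.Ioc a 1) := by
    apply strictMonoOn_of_deriv_pos (convex_Ioc a 1)
      (hcontOn _ (fun x hx => hx.1))
    intro x hx
    rw [interior_Ioc] at hx
    rw [(hderiv x hx.1).deriv]
    exact hsumpos x hx.1 hx.2
  have hanti : StrictAntiOn f (Set.Ici 1) := by
    apply strictAntiOn_of_deriv_neg (convex_Ici 1)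
      (hcontOn _ (fun x hx => lt_of_lt_of_le ha1 hx))
    intro x hx
    rw [interior_Ici] at hx
    rw [(hderiv x (lt_trans ha1 hx)).deriv]
    exact hsumneg x hx
  refine ⟨fun l hl => (hderiv l hl).deriv, hsumpos, hsumneg, ?_, ?_⟩
  · intro x hx y hy hxy
    rw [hqexp x hx.1, hqexp y hy.1]
    exact Real.exp_lt_exp.mpr (hmono hx hy hxy)
  · intro x hx y hy hxy
    rw [hqexp x (lt_of_lt_of_le ha1 hx), hqexp y (lt_of_lt_of_le ha1 hy)]
    exact Real.exp_lt_exp.mpr (hanti hx hy hxy)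
end

section
/- Let m ≥ 2, t ≥ 0, and let λ₁ : (0,∞) → (-t,∞) be the inverse of F(θ) := (t!/(m·(mt+m-1)!)) ∏_{i=t}^{mt+m-2}(θ+i). Then the set I := {β > 0 : 1 < λ₁(β²) < 2λ₁(β) - 1} is an open interval containing 1 and contained in (1/m, ∞). -/
lemma aux1 (M : ℕ) : ∀ t ≤ M+1, t.factorial * ∏ i ∈ Finset.Icc t M, (i+1) = (M+1).factorial := by
  induction M with
  | zero => intro t ht; interval_cases t <;> decide
  | succ M ih =>
    intro t ht
    by_cases h : t ≤ M + 1
    · rw [Finset.prod_Icc_succ_top h, ← mul_assoc, ih t h, Nat.factorial_succ (M+1)]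
      ring
    · have ht2 : t = M + 2 := by omega
      subst ht2
      rw [Finset.Icc_eq_empty (by omega), Finset.prod_empty, mul_one]

lemma aux2 (M : ℕ) : ∀ t ≤ M+1, (t+1).factorial * ∏ i ∈ Finset.Icc t M, (i+2) = (M+2).factorial := by
  induction M with
  | zero => intro t ht; interval_cases t <;> decide
  | succ M ih =>
    intro t ht
    by_cases h : t ≤ M + 1
    · rw [Finset.prod_Icc_succ_top h, ← mul_assoc, ih t h, Nat.factorial_succ (M+2)]
      ring
    · have ht2 : t = M + 2 := by omega
      subst ht2
      rw [Finset.Icc_eq_empty (by omega), Finset.prod_empty, mul_one]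

lemma auxIoo (S : Set ℝ) (hne : S.Nonempty) (hba : BddAbove S) (hbb : BddBelow S)
    (hsup : sSup S ∉ S) (hinf : sInf S ∉ S)
    (hoc : ∀ x ∈ S, ∀ y ∈ S, ∀ z : ℝ, x < z → z < y → z ∈ S) :
    S = Set.Ioo (sInf S) (sSup S) := by
  ext z
  constructor
  · intro hz
    refine ⟨lt_of_le_of_ne (csInf_le hbb hz) ?_, lt_of_le_of_ne (le_csSup hba hz) ?_⟩
    · intro h; exact hinf (h ▸ hz)
    · intro h; exact hsup (h ▸ hz)
  · rintro ⟨h1, h2⟩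
    obtain ⟨x, hx, hxz⟩ := (csInf_lt_iff hbb hne).1 h1
    obtain ⟨y, hy, hzy⟩ := (lt_csSup_iff hba hne).1 h2
    exact hoc x hx y hy z hxz hzy

private lemma auxsq (B i : ℝ) (hB : 2 ≤ B) (hi : 0 ≤ i) : 2*B-1+i ≤ (B+i)^2 := by
  nlinarith [sq_nonneg (B - 1 + i)]

private lemma auxhead (c B u : ℝ) (hc : 0 < c) (hB : 2 ≤ B) (h2 : 2 ≤ c*B) (hu : 0 ≤ u) :
    2*B-1+u ≤ c*(B+u)^2 := by
  nlinarith [mul_nonneg (sub_nonneg.2 h2) (by linarith : (0:ℝ) ≤ B),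
    mul_nonneg (sub_nonneg.2 h2) hu, mul_nonneg hc.le (mul_self_nonneg u)]

private lemma auxfactor (x y i : ℝ) (hi : 0 ≤ i) (hx : 1 ≤ x) (hxy : x ≤ y) :
    (2*y-1+i)*(x+i)^2 ≤ (2*x-1+i)*(y+i)^2 := by
  nlinarith [mul_nonneg (mul_nonneg (sub_nonneg.2 hxy) (sub_nonneg.2 hx)) (sub_nonneg.2 (hx.trans hxy)),
    mul_nonneg (mul_nonneg (sub_nonneg.2 hxy) hi) (sub_nonneg.2 hx),
    mul_nonneg (mul_nonneg (sub_nonneg.2 hxy) hi) (sub_nonneg.2 (hx.trans hxy)),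
    mul_nonneg (sub_nonneg.2 hxy) (sub_nonneg.2 hx),
    mul_nonneg (sub_nonneg.2 hxy) (sub_nonneg.2 (hx.trans hxy))]

set_option maxHeartbeats 1000000 in
/-- Lemma 8.5, first part: with `λ₁ : (0,∞) → (-t,∞)` the inverse
of `F`, the set `I = {β > 0 : 1 < λ₁(β²) < 2λ₁(β) - 1}` is an open interval
containing `1` and contained in `(1/m, ∞)`. -/
theorem stmt12 (m t : ℕ) (hm : 2 ≤ m)
    (F : ℝ → ℝ)
    (hF : ∀ θ : ℝ, F θ =
      (Nat.factorial t : ℝ) / (m * Nat.factorial (m * t + m - 1)) *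
        ∏ i ∈ Finset.Icc t (m * t + m - 2), (θ + i))
    (lam : ℝ → ℝ)
    (hlam : ∀ β : ℝ, 0 < β → -(t : ℝ) < lam β ∧ F (lam β) = β)
    (hlam' : ∀ l : ℝ, -(t : ℝ) < l → lam (F l) = l) :
    ∃ a b : ℝ,
      {β : ℝ | 0 < β ∧ 1 < lam (β ^ 2) ∧ lam (β ^ 2) < 2 * lam β - 1} = Set.Ioo a b ∧
      (1 : ℝ) ∈ Set.Ioo a b ∧
      Set.Ioo a b ⊆ Set.Ioi (1 / (m : ℝ)) := by
  -- basic numerology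
  have hmt2 : 2 ≤ m * t + m := le_trans hm (Nat.le_add_left m (m*t))
  set K : ℕ := m * t + m - 2 with hKdef
  have hK1 : m * t + m - 1 = K + 1 := by omega
  have htK : t ≤ K := by
    have h2t : 2 * t ≤ m * t := Nat.mul_le_mul_right t hm
    omega
  have hK2 : K + 2 = m * (t + 1) := by
    have : m * (t+1) = m * t + m := by ring
    omega
  set J : Finset ℕ := Finset.Icc t K with hJdef
  have hJne : J.Nonempty := Finset.nonempty_Icc.2 htK
  set c : ℝ := (Nat.factorial t : ℝ) / (m * Nat.factorial (K + 1)) with hcdef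
  have hm0 : (0:ℝ) < m := by positivity
  have hc : 0 < c := by
    rw [hcdef]; positivity
  have hF' : ∀ θ : ℝ, F θ = c * ∏ i ∈ J, (θ + i) := by
    intro θ; rw [hF θ, hK1]
  have htreal : -(t:ℝ) ≤ 0 := by simp
  -- positivity and monotonicity of F
  have hfacpos : ∀ θ : ℝ, -(t:ℝ) < θ → ∀ i ∈ J, (0:ℝ) < θ + i := by
    intro θ hθ i hi
    have hti : t ≤ i := (Finset.mem_Icc.1 hi).1
    have : (t:ℝ) ≤ i := by exact_mod_cast hti
    linarith
  have hFpos : ∀ θ : ℝ, -(t:ℝ) < θ → 0 < F θ := by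
    intro θ hθ
    rw [hF' θ]
    exact mul_pos hc (Finset.prod_pos (hfacpos θ hθ))
  have hFmono : ∀ x y : ℝ, -(t:ℝ) < x → x < y → F x < F y := by
    intro x y hx hxy
    rw [hF' x, hF' y]
    refine mul_lt_mul_of_pos_left ?_ hc
    exact Finset.prod_lt_prod_of_nonempty (hfacpos x hx) (fun i _ => by linarith) hJne
  have hFmono' : ∀ x y : ℝ, -(t:ℝ) < x → -(t:ℝ) < y → F x < F y → x < y := by
    intro x y hx hy hlt
    by_contra h
    rcases eq_or_lt_of_le (not_lt.1 h) with h' | h'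
    · rw [h'] at hlt; exact lt_irrefl _ hlt
    · exact absurd (hFmono y x hy h') (not_lt.2 hlt.le)
  -- value computations
  have hprod1 : (Nat.factorial t : ℝ) * ∏ i ∈ J, ((1:ℝ) + i) = Nat.factorial (K+1) := by
    have h := aux1 K t (by omega)
    calc (Nat.factorial t : ℝ) * ∏ i ∈ J, ((1:ℝ) + i)
        = ((t.factorial * ∏ i ∈ J, (i+1) : ℕ) : ℝ) := by
          push_cast
          exact congrArg _ (Finset.prod_congr rfl fun i _ => add_comm _ _)
      _ = _ := by rw [h]
  have hprod2 : ((Nat.factorial (t+1)) : ℝ) * ∏ i ∈ J, ((2:ℝ) + i) = Nat.factorial (K+2) := by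
    have h := aux2 K t (by omega)
    calc ((Nat.factorial (t+1)) : ℝ) * ∏ i ∈ J, ((2:ℝ) + i)
        = (((t+1).factorial * ∏ i ∈ J, (i+2) : ℕ) : ℝ) := by
          push_cast
          exact congrArg _ (Finset.prod_congr rfl fun i _ => add_comm _ _)
      _ = _ := by rw [h]
  have hfac1 : (0:ℝ) < Nat.factorial (K+1) := by positivity
  have hF1 : F 1 = 1 / m := by
    rw [hF' 1, hcdef, div_mul_eq_mul_div, hprod1, div_eq_div_iff (by positivity) (by positivity)]
    ring
  have hF2 : F 2 = 1 := by
    have hP2 : ∏ i ∈ J, ((2:ℝ) + i) = (Nat.factorial (K+2) : ℝ) / (Nat.factorial (t+1)) := by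
      rw [eq_div_iff (by positivity), mul_comm]; exact hprod2
    have e1 : (Nat.factorial (K+2) : ℝ) = (K+2) * Nat.factorial (K+1) := by
      exact_mod_cast Nat.factorial_succ (K+1)
    have e2 : (Nat.factorial (t+1) : ℝ) = (t+1) * Nat.factorial t := by
      exact_mod_cast Nat.factorial_succ t
    have e3 : ((K:ℝ)+2) = m * (t+1) := by exact_mod_cast hK2
    rw [hF' 2, hP2, hcdef, e1, e2, e3]
    have h1 : (0:ℝ) < Nat.factorial t := by positivity
    have h2 : (0:ℝ) < (t:ℝ) + 1 := by positivity
    field_simp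
  have htlt1 : -(t:ℝ) < 1 := by linarith
  have htlt2 : -(t:ℝ) < 2 := by linarith
  have hlam1 : lam 1 = 2 := by rw [← hF2]; exact hlam' 2 htlt2
  -- lam is strictly monotone on positives
  have hlammono : ∀ x y : ℝ, 0 < x → x < y → lam x < lam y := by
    intro x y hx hxy
    obtain ⟨hx1, hx2⟩ := hlam x hx
    obtain ⟨hy1, hy2⟩ := hlam y (hx.trans hxy)
    exact hFmono' _ _ hx1 hy1 (by rw [hx2, hy2]; exact hxy)
  clear_value c K J
  set S : Set ℝ := {β : ℝ | 0 < β ∧ 1 < lam (β ^ 2) ∧ lam (β ^ 2) < 2 * lam β - 1} with hSdef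
  -- membership extraction
  have hmem : ∀ β ∈ S, 1 < lam β ∧ F (lam β) = β ∧ 1/m < β^2 ∧ β^2 < F (2 * lam β - 1) := by
    rintro β ⟨hβ0, hβ1, hβ2⟩
    have hβ20 : 0 < β^2 := by positivity
    obtain ⟨hl1, hl2⟩ := hlam β hβ0
    obtain ⟨hq1, hq2⟩ := hlam (β^2) hβ20
    have hlb1 : 1 < lam β := by linarith
    have hgt : 1/m < β^2 := by
      rw [← hF1, ← hq2]
      exact hFmono 1 _ htlt1 hβ1
    have hlt : β^2 < F (2 * lam β - 1) := by
      rw [← hq2]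
      exact hFmono _ _ hq1 hβ2
    exact ⟨hlb1, hl2, hgt, hlt⟩
  -- membership construction
  have hstep : ∀ l : ℝ, 1 < l → 1/m < F l ^ 2 → F l ^ 2 < F (2*l - 1) → F l ∈ S := by
    intro l hl hgt hlt
    have hld : -(t:ℝ) < l := by linarith
    have hl2d : -(t:ℝ) < 2*l - 1 := by linarith
    have hβ0 : 0 < F l := hFpos l hld
    have hβ20 : 0 < F l ^ 2 := by positivity
    obtain ⟨hq1, hq2⟩ := hlam (F l ^ 2) hβ20
    have hlamFl : lam (F l) = l := hlam' l hld
    refine ⟨hβ0, ?_, ?_⟩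
    · have : F 1 < F (lam (F l ^ 2)) := by rw [hq2, hF1]; exact hgt
      exact hFmono' 1 _ htlt1 hq1 this
    · rw [hlamFl]
      have : F (lam (F l ^ 2)) < F (2*l - 1) := by rw [hq2]; exact hlt
      exact hFmono' _ _ hq1 hl2d this
  -- key downward-transfer lemma
  have keyP : ∀ x y : ℝ, 1 < x → x ≤ y → F y ^ 2 < F (2*y-1) → F x ^ 2 < F (2*x-1) := by
    intro x y hx hxy hy
    have hxd : -(t:ℝ) < x := by linarith
    have hyd : -(t:ℝ) < y := by linarith
    have hx2d : -(t:ℝ) < 2*x-1 := by linarith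
    have hy2d : -(t:ℝ) < 2*y-1 := by linarith
    have hfac : ∀ i ∈ J, (2*y-1+i)*(x+i)^2 ≤ (2*x-1+i)*(y+i)^2 := by
      intro i hi
      exact auxfactor x y i (Nat.cast_nonneg i) hx.le hxy
    have hprodle : (∏ i ∈ J, ((2*y-1+i)*(x+i)^2)) ≤ ∏ i ∈ J, ((2*x-1+i)*(y+i)^2) := by
      refine Finset.prod_le_prod (fun i hi => ?_) hfac
      have h1 := hfacpos (2*y-1) hy2d i hi
      have h2 := hfacpos x hxd i hi
      positivity
    rw [Finset.prod_mul_distrib, Finset.prod_mul_distrib] at hprodle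
    rw [Finset.prod_pow, Finset.prod_pow] at hprodle
    set A : ℝ := ∏ i ∈ J, (x + i) with hA
    set B : ℝ := ∏ i ∈ J, (y + i) with hB
    set P : ℝ := ∏ i ∈ J, (2*x-1 + i) with hP
    set Q : ℝ := ∏ i ∈ J, (2*y-1 + i) with hQ
    have hA0 : 0 < A := Finset.prod_pos (hfacpos x hxd)
    have hB0 : 0 < B := Finset.prod_pos (hfacpos y hyd)
    have hP0 : 0 < P := Finset.prod_pos (hfacpos _ hx2d)
    have hQ0 : 0 < Q := Finset.prod_pos (hfacpos _ hy2d)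
    have hyineq : c * B^2 < Q := by
      rw [hF' y, hF' (2*y-1)] at hy
      rw [mul_pow] at hy
      rw [← hB, ← hQ] at hy
      have h' : c * (c * B^2) < c * Q := by
        rw [show c * (c * B^2) = c^2 * B^2 by ring]; exact hy
      exact (mul_lt_mul_iff_right₀ hc).1 h'
    -- hprodle : Q * A^2 ≤ P * B^2
    have hgoal : c * A^2 < P := by
      have h1 : c * A^2 * B^2 < P * B^2 := by
        calc c * A^2 * B^2 = A^2 * (c * B^2) := by ring
          _ < A^2 * Q := (mul_lt_mul_iff_right₀ (by positivity)).2 hyineq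
          _ = Q * A^2 := by ring
          _ ≤ P * B^2 := hprodle
      exact lt_of_mul_lt_mul_right h1 (by positivity)
    rw [hF' x, hF' (2*x-1), mul_pow, ← hA, ← hP]
    rw [show c^2 * A^2 = c * (c * A^2) by ring]
    exact (mul_lt_mul_iff_right₀ hc).2 hgoal
  -- basic membership of 1
  have h1S : (1:ℝ) ∈ S := by
    refine ⟨one_pos, ?_, ?_⟩
    · rw [one_pow, hlam1]; norm_num
    · rw [one_pow, hlam1]; norm_num
  have hSne : S.Nonempty := ⟨1, h1S⟩
  have hbb : BddBelow S := ⟨0, fun β hβ => hβ.1.le⟩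
  -- bounded above
  set B₀ : ℝ := max 2 (2/c) with hB₀
  have hB₀2 : (2:ℝ) ≤ B₀ := le_max_left _ _
  have hB₀c : 2 ≤ c * B₀ := by
    rw [mul_comm, ← div_le_iff₀ hc]
    exact le_max_right _ _
  have hB₀1 : (1:ℝ) < B₀ := by linarith
  clear_value B₀
  have hnotP : ¬ (F B₀ ^ 2 < F (2*B₀ - 1)) := by
    push_neg
    have hB₀d : -(t:ℝ) < B₀ := by linarith
    have hB₀2d : -(t:ℝ) < 2*B₀-1 := by linarith
    have htJ : t ∈ J := by rw [hJdef]; exact Finset.mem_Icc.2 ⟨le_rfl, htK⟩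
    rw [hF' B₀, hF' (2*B₀-1), mul_pow]
    have hkey : (∏ i ∈ J, (2*B₀-1 + i)) ≤ c * ∏ i ∈ J, (B₀ + i)^2 := by
      rw [← Finset.mul_prod_erase J _ htJ, ← Finset.mul_prod_erase J (fun i => (B₀ + (i:ℝ))^2) htJ]
      have hrest : (∏ i ∈ J.erase t, (2*B₀-1 + i)) ≤ ∏ i ∈ J.erase t, (B₀ + i)^2 := by
        refine Finset.prod_le_prod (fun i hi => ?_) (fun i hi => ?_)
        · have := hfacpos (2*B₀-1) hB₀2d i (Finset.erase_subset _ _ hi)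
          linarith
        · exact auxsq B₀ i hB₀2 (Nat.cast_nonneg i)
      have hhead : (2*B₀-1 + t) ≤ c * (B₀ + t)^2 :=
        auxhead c B₀ t hc hB₀2 hB₀c (Nat.cast_nonneg t)
      have h0 : (0:ℝ) ≤ ∏ i ∈ J.erase t, (2*B₀-1 + i) :=
        Finset.prod_nonneg (fun i hi =>
          (hfacpos (2*B₀-1) hB₀2d i (Finset.erase_subset _ _ hi)).le)
      calc (2*B₀-1 + t) * ∏ i ∈ J.erase t, (2*B₀-1 + i)
          ≤ (c * (B₀ + t)^2) * ∏ i ∈ J.erase t, (B₀ + i)^2 := by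
            refine mul_le_mul hhead hrest h0 ?_
            have := hfacpos B₀ hB₀d t htJ
            positivity
        _ = c * ((B₀ + t)^2 * ∏ i ∈ J.erase t, (B₀ + i)^2) := by ring
      -- need: c * ((B₀+t)^2 * ∏) = c * (B₀+t)^2 * ∏ as goal shape; handled by calc above
    calc c * ∏ i ∈ J, (2*B₀-1 + i) ≤ c * (c * ∏ i ∈ J, (B₀ + i)^2) :=
          mul_le_mul_of_nonneg_left hkey hc.le
      _ = c^2 * ∏ i ∈ J, (B₀ + i)^2 := by ring
      _ = c^2 * (∏ i ∈ J, (B₀ + i))^2 := by rw [Finset.prod_pow]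
  have hba : BddAbove S := by
    refine ⟨F B₀, fun β hβ => ?_⟩
    obtain ⟨hl1, hl2, _, hlt⟩ := hmem β hβ
    have hPl : F (lam β) ^ 2 < F (2 * lam β - 1) := by rw [hl2]; exact hlt
    have hlb : lam β < B₀ := by
      by_contra h
      exact hnotP (keyP B₀ (lam β) hB₀1 (not_lt.1 h) hPl)
    have := hFmono (lam β) B₀ (by linarith) hlb
    rw [hl2] at this
    exact this.le
  -- continuity
  have hFcont : Continuous F := by
    have : F = fun θ : ℝ => c * ∏ i ∈ J, (θ + (i:ℝ)) := funext hF'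
    rw [this]
    exact continuous_const.mul
      (continuous_finset_prod _ (fun i _ => continuous_id.add continuous_const))
  have hc1 : Continuous fun l : ℝ => F l ^ 2 := hFcont.pow 2
  have hc2 : Continuous fun l : ℝ => F (2*l - 1) :=
    hFcont.comp ((continuous_const.mul continuous_id).sub continuous_const)
  have hUopen : IsOpen {l : ℝ | 1 < l ∧ 1/m < F l ^ 2 ∧ F l ^ 2 < F (2*l - 1)} := by
    refine IsOpen.inter (isOpen_lt continuous_const continuous_id) (IsOpen.inter ?_ ?_)
    · exact isOpen_lt continuous_const hc1
    · exact isOpen_lt hc1 hc2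
  -- the endpoints are not in S
  have hmemU : ∀ β ∈ S, lam β ∈ {l : ℝ | 1 < l ∧ 1/m < F l ^ 2 ∧ F l ^ 2 < F (2*l - 1)} := by
    intro β hβ
    obtain ⟨hl1, hl2, hgt, hlt⟩ := hmem β hβ
    exact ⟨hl1, by rw [hl2]; exact hgt, by rw [hl2]; exact hlt⟩
  have hsupn : sSup S ∉ S := by
    intro hb
    obtain ⟨hl1, hl2, hgt, hlt⟩ := hmem _ hb
    have hU : {l : ℝ | 1 < l ∧ 1/m < F l ^ 2 ∧ F l ^ 2 < F (2*l - 1)} ∈ nhdsWithin (lam (sSup S)) (Set.Ioi (lam (sSup S))) :=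
      mem_nhdsWithin_of_mem_nhds (hUopen.mem_nhds (hmemU _ hb))
    obtain ⟨l', hl'U, hl'gt⟩ := Filter.nonempty_of_mem (Filter.inter_mem hU self_mem_nhdsWithin)
    have hFl' : F l' ∈ S := hstep l' hl'U.1 hl'U.2.1 hl'U.2.2
    have : F (lam (sSup S)) < F l' := hFmono _ _ (by linarith) hl'gt
    rw [hl2] at this
    exact absurd (le_csSup hba hFl') (not_le.2 this)
  have hinfn : sInf S ∉ S := by
    intro ha
    obtain ⟨hl1, hl2, hgt, hlt⟩ := hmem _ ha
    have hU : {l : ℝ | 1 < l ∧ 1/m < F l ^ 2 ∧ F l ^ 2 < F (2*l - 1)} ∈ nhdsWithin (lam (sInf S)) (Set.Iio (lam (sInf S))) :=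
      mem_nhdsWithin_of_mem_nhds (hUopen.mem_nhds (hmemU _ ha))
    obtain ⟨l', hl'U, hl'lt⟩ := Filter.nonempty_of_mem (Filter.inter_mem hU self_mem_nhdsWithin)
    have hFl' : F l' ∈ S := hstep l' hl'U.1 hl'U.2.1 hl'U.2.2
    have : F l' < F (lam (sInf S)) := hFmono _ _ (by linarith [hl'U.1]) hl'lt
    rw [hl2] at this
    exact absurd (csInf_le hbb hFl') (not_le.2 this)
  -- order-connectedness
  have hoc : ∀ x ∈ S, ∀ y ∈ S, ∀ z : ℝ, x < z → z < y → z ∈ S := by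
    intro x hx y hy z hxz hzy
    obtain ⟨hxl1, hxl2, hxgt, _⟩ := hmem x hx
    obtain ⟨hyl1, hyl2, _, hylt⟩ := hmem y hy
    have hz0 : 0 < z := lt_trans hx.1 hxz
    have hlz : lam x < lam z := hlammono x z hx.1 hxz
    have hlzy : lam z < lam y := hlammono z y hz0 hzy
    have hz1 : 1 < lam z := lt_trans hxl1 hlz
    have hPy : F (lam y) ^ 2 < F (2 * lam y - 1) := by rw [hyl2]; exact hylt
    have hPz : F (lam z) ^ 2 < F (2 * lam z - 1) := keyP _ _ hz1 hlzy.le hPy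
    obtain ⟨hlzd, hlz2⟩ := hlam z hz0
    have hzgt : 1/m < z^2 := by
      have : x^2 < z^2 := by nlinarith [hx.1, hxz]
      linarith
    have := hstep (lam z) hz1 (by rw [hlz2]; exact hzgt) hPz
    rw [hlz2] at this
    exact this
  -- assemble
  refine ⟨sInf S, sSup S, ?_, ?_, ?_⟩
  · exact auxIoo S hSne hba hbb hsupn hinfn hoc
  · rw [← auxIoo S hSne hba hbb hsupn hinfn hoc]; exact h1S
  · intro z hz
    rw [← auxIoo S hSne hba hbb hsupn hinfn hoc] at hz
    obtain ⟨_, _, hzgt, _⟩ := hmem z hz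
    have hz0 : 0 < z := hz.1
    have hm2 : (2:ℝ) ≤ m := by exact_mod_cast hm
    rw [Set.mem_Ioi, div_lt_iff₀ hm0]
    by_contra h
    push_neg at h
    have h1 : z * m ≤ 1 := h
    have h2 : 1 < m * z^2 := by
      rw [div_lt_iff₀ hm0] at hzgt
      linarith [hzgt]
    nlinarith
end

section
/- Let H be a separable Hilbert space, 0 < s ≤ 2, and let T : P → P be defined on the set P of probability laws μ = L(Z) on H with E‖Z‖^s < ∞ (and additionally EZ = 0 if 1 < s ≤ 2) by T(L(Z)) = L(∑_{r=1}^m A_r*(Z^{(r)}) + b*), where A_1*,…,A_m* are random bounded linear operators on H with E‖A_r*‖_op^s < ∞, b* is an H-valued random variable with E‖b*‖^s < ∞ (and Eb* = 0 if s > 1), (A_1*,…,A_m*,b*) is independent of the independent copies Z^{(1)},…,Z^{(m)} of Z. If E ∑_{r=1}^m ‖A_r*‖_op^s < 1, then T is a strict contraction with respect to the Zolotarev metric ζ_s: ζ_s(T(μ), T(ν)) ≤ (E ∑_r ‖A_r*‖_op^s) · ζ_s(μ, ν) for all μ, ν ∈ P. -/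
open MeasureTheory ENNReal

set_option linter.unusedSectionVars false
set_option maxHeartbeats 1000000

section St17Aux

variable {H : Type*} [NormedAddCommGroup H] [InnerProductSpace ℝ H]
    [CompleteSpace H] [TopologicalSpace.SeparableSpace H]
    [MeasurableSpace H] [BorelSpace H]

lemma st17_iFD0 (f : H → ℝ) (x y : H) :
    ‖iteratedFDeriv ℝ 0 f x - iteratedFDeriv ℝ 0 f y‖ = ‖f x - f y‖ := by
  rw [iteratedFDeriv_zero_eq_comp]
  simp only [Function.comp_apply]
  rw [← map_sub, LinearIsometryEquiv.norm_map]

lemma st17_iFD1 (f : H → ℝ) (x y : H) :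
    ‖iteratedFDeriv ℝ 1 f x - iteratedFDeriv ℝ 1 f y‖ = ‖fderiv ℝ f x - fderiv ℝ f y‖ := by
  have h : ∀ z : H, (continuousMultilinearCurryFin1 ℝ H ℝ) (iteratedFDeriv ℝ 1 f z)
      = fderiv ℝ f z := by
    intro z
    ext v
    simp [iteratedFDeriv_one_apply, Fin.snoc]
  rw [← h x, ← h y, ← map_sub, LinearIsometryEquiv.norm_map]

lemma st17_cast (f : H → ℝ) {n k : ℕ} (h : n = k) (x y : H) :
    ‖iteratedFDeriv ℝ n f x - iteratedFDeriv ℝ n f y‖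
      = ‖iteratedFDeriv ℝ k f x - iteratedFDeriv ℝ k f y‖ := by subst h; rfl

lemma st17_ceil_cases {s : ℝ} (hs0 : 0 < s) (hs2 : s ≤ 2) : ⌈s⌉₊ = 1 ∨ ⌈s⌉₊ = 2 := by
  have h1 : 1 ≤ ⌈s⌉₊ := Nat.one_le_ceil_iff.mpr hs0
  have h2 : ⌈s⌉₊ ≤ 2 := Nat.ceil_le.mpr (by exact_mod_cast hs2)
  omega

lemma st17_rpow_two (s : ℝ) (hs0 : 0 < s) {a b : ℝ} (ha : 0 ≤ a) (hb : 0 ≤ b) :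
    (a + b) ^ s ≤ 2 ^ s * (a ^ s + b ^ s) := by
  have h1 : a + b ≤ 2 * max a b := by
    rcases le_total a b with h | h
    · rw [max_eq_right h]; linarith
    · rw [max_eq_left h]; linarith
  have h2 : (0:ℝ) ≤ max a b := le_trans ha (le_max_left _ _)
  calc (a + b) ^ s ≤ (2 * max a b) ^ s := Real.rpow_le_rpow (by positivity) h1 hs0.le
    _ = 2 ^ s * (max a b) ^ s := Real.mul_rpow (by norm_num) h2
    _ ≤ 2 ^ s * (a ^ s + b ^ s) := by
        have h3 : (max a b) ^ s ≤ a ^ s + b ^ s := by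
          rcases le_total a b with h | h
          · rw [max_eq_right h]
            have := Real.rpow_nonneg ha s; linarith
          · rw [max_eq_left h]
            have := Real.rpow_nonneg hb s; linarith
        have h2s : (0:ℝ) ≤ 2 ^ s := Real.rpow_nonneg (by norm_num) s
        nlinarith

lemma st17_rpow_sum {ι : Type*} (s : ℝ) (hs0 : 0 < s) (t : Finset ι) :
    ∃ K : ℝ, 1 ≤ K ∧ ∀ f : ι → ℝ, (∀ i, 0 ≤ f i) →
      (∑ i ∈ t, f i) ^ s ≤ K * ∑ i ∈ t, f i ^ s := by
  classical
  induction t using Finset.induction_on with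
  | empty => exact ⟨1, le_refl 1, fun f hf => by simp [Real.zero_rpow hs0.ne']⟩
  | @insert a t ha ih =>
    obtain ⟨K, hK1, hK⟩ := ih
    have h2s1 : (1:ℝ) ≤ 2 ^ s := by
      calc (1:ℝ) = 1 ^ s := (Real.one_rpow s).symm
        _ ≤ 2 ^ s := Real.rpow_le_rpow zero_le_one one_le_two hs0.le
    refine ⟨2 ^ s * (K + 1), ?_, fun f hf => ?_⟩
    · nlinarith
    · have h2s : (0:ℝ) ≤ 2 ^ s := by linarith
      have hsum0 : 0 ≤ ∑ i ∈ t, f i := Finset.sum_nonneg fun i _ => hf i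
      have hsum0' : 0 ≤ ∑ i ∈ t, f i ^ s :=
        Finset.sum_nonneg fun i _ => Real.rpow_nonneg (hf i) s
      rw [Finset.sum_insert ha, Finset.sum_insert ha]
      calc (f a + ∑ i ∈ t, f i) ^ s
          ≤ 2 ^ s * ((f a) ^ s + (∑ i ∈ t, f i) ^ s) := st17_rpow_two s hs0 (hf a) hsum0
        _ ≤ 2 ^ s * ((f a) ^ s + K * ∑ i ∈ t, f i ^ s) := by
            have := hK f hf
            nlinarith
        _ ≤ 2 ^ s * (K + 1) * ((f a) ^ s + ∑ i ∈ t, f i ^ s) := by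
            have hfa := Real.rpow_nonneg (hf a) s
            have hK0 : (0:ℝ) ≤ K := le_trans zero_le_one hK1
            nlinarith [mul_nonneg (mul_nonneg h2s hK0) hfa, mul_nonneg h2s hsum0']

lemma st17_int_of_rpow {α : Type*} [MeasurableSpace α] {μ : Measure α} [IsFiniteMeasure μ]
    {s : ℝ} (hs0 : 0 < s) (hs1 : 1 ≤ s) {φ : α → ℝ} (hφ0 : ∀ a, 0 ≤ φ a)
    (h : Integrable (fun a => φ a ^ s) μ) : Integrable φ μ := by
  have hm : AEStronglyMeasurable φ μ := by
    have hφ : φ = fun a => (φ a ^ s) ^ s⁻¹ :=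
      funext fun a => (Real.rpow_rpow_inv (hφ0 a) hs0.ne').symm
    rw [hφ]
    exact (Real.continuous_rpow_const (by positivity)).comp_aestronglyMeasurable
      h.aestronglyMeasurable
  refine ((integrable_const 1).add h).mono' hm (Filter.Eventually.of_forall fun a => ?_)
  rw [Real.norm_eq_abs, abs_of_nonneg (hφ0 a)]
  rcases le_total (φ a) 1 with h1 | h1
  · have := Real.rpow_nonneg (hφ0 a) s
    simp only [Pi.add_apply]; linarith
  · have h2 : φ a ≤ φ a ^ s := by
      calc φ a = φ a ^ (1:ℝ) := (Real.rpow_one _).symm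
        _ ≤ φ a ^ s := Real.rpow_le_rpow_of_exponent_le h1 hs1
    simp only [Pi.add_apply]; linarith

lemma st17_mom {s : ℝ} (hs0 : 0 < s) (μ : Measure H)
    (hm : ∫⁻ x, (‖x‖₊ : ℝ≥0∞) ^ s ∂μ < ⊤) : Integrable (fun x : H => ‖x‖ ^ s) μ := by
  constructor
  · exact ((Real.continuous_rpow_const hs0.le).comp continuous_norm).aestronglyMeasurable
  · rw [HasFiniteIntegral]
    convert hm using 1
    apply lintegral_congr
    intro x
    rw [Real.enorm_rpow_of_nonneg (norm_nonneg x) hs0.le, enorm_norm]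
    rfl

lemma st17_keyB (s : ℝ) (hs0 : 0 < s) (hs2 : s ≤ 2)
    (μ ν : Measure H) [IsProbabilityMeasure μ] [IsProbabilityMeasure ν]
    (D : ℝ)
    (hD : ∀ f : H → ℝ, ContDiff ℝ (⌈s⌉₊ - 1) f →
        (∀ x y : H, ‖iteratedFDeriv ℝ (⌈s⌉₊ - 1) f x - iteratedFDeriv ℝ (⌈s⌉₊ - 1) f y‖ ≤
          ‖x - y‖ ^ (s - (⌈s⌉₊ - 1 : ℕ))) →
        |∫ x, f x ∂μ - ∫ x, f x ∂ν| ≤ D)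
    (f : H → ℝ) (hf : ContDiff ℝ (⌈s⌉₊ - 1) f)
    (hlip : ∀ x y : H, ‖iteratedFDeriv ℝ (⌈s⌉₊ - 1) f x - iteratedFDeriv ℝ (⌈s⌉₊ - 1) f y‖ ≤
          ‖x - y‖ ^ (s - (⌈s⌉₊ - 1 : ℕ)))
    (A : H →L[ℝ] H) (c : H) :
    |∫ x, f (A x + c) ∂μ - ∫ x, f (A x + c) ∂ν| ≤ ‖A‖ ^ s * D := by
  by_cases hA : ‖A‖ = 0
  · have hA0 : A = 0 := norm_eq_zero.mp hA
    subst hA0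
    simp only [ContinuousLinearMap.zero_apply, zero_add]
    rw [integral_const, integral_const]
    simp [Real.zero_rpow hs0.ne']
  · have hApos : 0 < ‖A‖ := (norm_nonneg A).lt_of_ne (Ne.symm hA)
    set t : ℝ := ‖A‖ ^ s with ht
    have htpos : 0 < t := Real.rpow_pos_of_pos hApos s
    set F : H → ℝ := fun x => f (A x + c) with hF
    have hFcd : ContDiff ℝ ((⌈s⌉₊ - 1 : ℕ) : ℕ∞) F :=
      hf.comp (A.contDiff.add contDiff_const)
    set g : H → ℝ := t⁻¹ • F with hg
    have hgcd : ContDiff ℝ ((⌈s⌉₊ - 1 : ℕ) : ℕ∞) g := hFcd.const_smul t⁻¹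
    have hFlip : ∀ x y : H,
        ‖iteratedFDeriv ℝ (⌈s⌉₊ - 1) F x - iteratedFDeriv ℝ (⌈s⌉₊ - 1) F y‖
          ≤ t * ‖x - y‖ ^ (s - (⌈s⌉₊ - 1 : ℕ)) := by
      have hsub : ∀ x y : H, (A x + c) - (A y + c) = A (x - y) := by
        intro x y
        rw [add_sub_add_right_eq_sub, ← map_sub]
      rcases st17_ceil_cases hs0 hs2 with hc | hc
      · have hm : ⌈s⌉₊ - 1 = 0 := by omega
        simp only [hm, Nat.cast_zero, sub_zero] at hlip ⊢
        intro x y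
        rw [st17_cast F hm, st17_iFD0]
        calc ‖F x - F y‖ = ‖f (A x + c) - f (A y + c)‖ := rfl
          _ ≤ ‖(A x + c) - (A y + c)‖ ^ s := by
              have h1 := hlip (A x + c) (A y + c)
              rwa [st17_cast f hm, st17_iFD0] at h1
          _ = ‖A (x - y)‖ ^ s := by rw [hsub]
          _ ≤ (‖A‖ * ‖x - y‖) ^ s :=
              Real.rpow_le_rpow (norm_nonneg _) (A.le_opNorm _) hs0.le
          _ = t * ‖x - y‖ ^ s := Real.mul_rpow (norm_nonneg A) (norm_nonneg _)
      · have hs1 : (1:ℝ) ≤ s := by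
          by_contra h
          push_neg at h
          have : ⌈s⌉₊ ≤ 1 := Nat.ceil_le.mpr (by exact_mod_cast h.le)
          omega
        have hm : ⌈s⌉₊ - 1 = 1 := by omega
        have hf' : ContDiff ℝ ((⌈s⌉₊ - 1 : ℕ) : ℕ∞) f := by exact_mod_cast hf
        simp only [hm, Nat.cast_one] at hlip hf' ⊢
        have hdf : Differentiable ℝ f := hf'.differentiable (by simp)
        have hlip' : ∀ x y : H, ‖fderiv ℝ f x - fderiv ℝ f y‖ ≤ ‖x - y‖ ^ (s - 1) := by
          intro x y
          have h1 := hlip x y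
          rwa [st17_cast f hm, st17_iFD1] at h1
        intro x y
        rw [st17_cast F hm, st17_iFD1]
        have hFd : ∀ z : H, fderiv ℝ F z = (fderiv ℝ f (A z + c)).comp A := by
          intro z
          have h1 : HasFDerivAt (fun w : H => A w + c) A z := A.hasFDerivAt.add_const c
          exact ((hdf (A z + c)).hasFDerivAt.comp z h1).fderiv
        rw [hFd x, hFd y, ← ContinuousLinearMap.sub_comp]
        have hAA : ‖A‖ ^ (s - 1) * ‖A‖ = t := by
          rw [ht]
          nth_rewrite 2 [← Real.rpow_one ‖A‖]
          rw [← Real.rpow_add hApos]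
          norm_num
        calc ‖(fderiv ℝ f (A x + c) - fderiv ℝ f (A y + c)).comp A‖
            ≤ ‖fderiv ℝ f (A x + c) - fderiv ℝ f (A y + c)‖ * ‖A‖ :=
              ContinuousLinearMap.opNorm_comp_le _ _
          _ ≤ ‖(A x + c) - (A y + c)‖ ^ (s - 1) * ‖A‖ :=
              mul_le_mul_of_nonneg_right (hlip' _ _) (norm_nonneg A)
          _ = ‖A (x - y)‖ ^ (s - 1) * ‖A‖ := by rw [hsub]
          _ ≤ (‖A‖ * ‖x - y‖) ^ (s - 1) * ‖A‖ :=
              mul_le_mul_of_nonneg_right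
                (Real.rpow_le_rpow (norm_nonneg _) (A.le_opNorm _) (by linarith))
                (norm_nonneg A)
          _ = t * ‖x - y‖ ^ (s - 1) := by
              rw [Real.mul_rpow (norm_nonneg A) (norm_nonneg _), ← hAA]
              ring
    have hglip : ∀ x y : H,
        ‖iteratedFDeriv ℝ (⌈s⌉₊ - 1) g x - iteratedFDeriv ℝ (⌈s⌉₊ - 1) g y‖
          ≤ ‖x - y‖ ^ (s - (⌈s⌉₊ - 1 : ℕ)) := by
      intro x y
      rw [hg, iteratedFDeriv_const_smul_apply (i := ⌈s⌉₊ - 1) (f := F) (x := x) (by exact_mod_cast hFcd.contDiffAt),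
        iteratedFDeriv_const_smul_apply (i := ⌈s⌉₊ - 1) (f := F) (x := y) (by exact_mod_cast hFcd.contDiffAt),
        ← smul_sub, norm_smul]
      have hnt : ‖t⁻¹‖ = t⁻¹ := by
        rw [Real.norm_eq_abs, abs_of_pos (inv_pos.mpr htpos)]
      rw [hnt]
      calc t⁻¹ * ‖iteratedFDeriv ℝ (⌈s⌉₊ - 1) F x - iteratedFDeriv ℝ (⌈s⌉₊ - 1) F y‖
          ≤ t⁻¹ * (t * ‖x - y‖ ^ (s - (⌈s⌉₊ - 1 : ℕ))) :=
            mul_le_mul_of_nonneg_left (hFlip x y) (inv_pos.mpr htpos).le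
        _ = ‖x - y‖ ^ (s - (⌈s⌉₊ - 1 : ℕ)) := by
            rw [← mul_assoc, inv_mul_cancel₀ htpos.ne', one_mul]
    have hgD := hD g (by exact_mod_cast hgcd) hglip
    have hμ : ∫ x, g x ∂μ = t⁻¹ * ∫ x, F x ∂μ := by
      rw [hg]
      simp only [Pi.smul_apply, smul_eq_mul]
      exact integral_const_mul t⁻¹ F
    have hν : ∫ x, g x ∂ν = t⁻¹ * ∫ x, F x ∂ν := by
      rw [hg]
      simp only [Pi.smul_apply, smul_eq_mul]
      exact integral_const_mul t⁻¹ F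
    rw [hμ, hν, ← mul_sub, abs_mul, abs_of_pos (inv_pos.mpr htpos)] at hgD
    have hfin : |∫ x, F x ∂μ - ∫ x, F x ∂ν| ≤ t * D := by
      calc |∫ x, F x ∂μ - ∫ x, F x ∂ν|
          = t * (t⁻¹ * |∫ x, F x ∂μ - ∫ x, F x ∂ν|) := by
            rw [← mul_assoc, mul_inv_cancel₀ htpos.ne', one_mul]
        _ ≤ t * D := mul_le_mul_of_nonneg_left hgD htpos.le
    exact hfin

lemma st17_growth (s : ℝ) (hs0 : 0 < s) (hs2 : s ≤ 2)
    (f : H → ℝ) (hf : ContDiff ℝ (⌈s⌉₊ - 1) f)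
    (hlip : ∀ x y : H, ‖iteratedFDeriv ℝ (⌈s⌉₊ - 1) f x - iteratedFDeriv ℝ (⌈s⌉₊ - 1) f y‖ ≤
          ‖x - y‖ ^ (s - (⌈s⌉₊ - 1 : ℕ))) :
    ∃ C1 C2 : ℝ, 0 ≤ C1 ∧ 0 ≤ C2 ∧ (s ≤ 1 → C2 = 0) ∧
      ∀ z : H, |f z| ≤ C1 + C2 * ‖z‖ + ‖z‖ ^ s := by
  rcases st17_ceil_cases hs0 hs2 with hc | hc
  · have hm : ⌈s⌉₊ - 1 = 0 := by omega
    simp only [hm, Nat.cast_zero, sub_zero] at hlip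
    refine ⟨|f 0|, 0, abs_nonneg _, le_refl 0, fun _ => rfl, fun z => ?_⟩
    have h1 := hlip z 0
    rw [st17_cast f hm, st17_iFD0, sub_zero] at h1
    calc |f z| = |f 0 + (f z - f 0)| := by ring_nf
      _ ≤ |f 0| + |f z - f 0| := abs_add_le _ _
      _ ≤ |f 0| + ‖z‖ ^ s := by
          rw [← Real.norm_eq_abs (f z - f 0)]
          linarith
      _ = |f 0| + 0 * ‖z‖ + ‖z‖ ^ s := by ring
  · have hm : ⌈s⌉₊ - 1 = 1 := by omega
    have hs1 : (1:ℝ) < s := by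
      by_contra h
      push_neg at h
      have : ⌈s⌉₊ ≤ 1 := Nat.ceil_le.mpr (by exact_mod_cast h)
      omega
    have hf' : ContDiff ℝ ((⌈s⌉₊ - 1 : ℕ) : ℕ∞) f := by exact_mod_cast hf
    simp only [hm, Nat.cast_one] at hf' hlip
    have hdf : Differentiable ℝ f := hf'.differentiable (by simp)
    have hlip' : ∀ x y : H, ‖fderiv ℝ f x - fderiv ℝ f y‖ ≤ ‖x - y‖ ^ (s - 1) := by
      intro x y
      have h1 := hlip x y
      rwa [st17_cast f hm, st17_iFD1] at h1
    refine ⟨|f 0|, ‖fderiv ℝ f 0‖, abs_nonneg _, norm_nonneg _,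
      fun h => absurd h (not_le.mpr hs1), fun z => ?_⟩
    have hseg : ∀ w ∈ segment ℝ (0:H) z,
        ‖fderiv ℝ f w‖ ≤ ‖fderiv ℝ f 0‖ + ‖z‖ ^ (s - 1) := by
      intro w hw
      have hwle : ‖w‖ ≤ ‖z‖ := by
        obtain ⟨a, bb, ha, hb, hab, rfl⟩ := hw
        rw [smul_zero, zero_add, norm_smul]
        calc ‖bb‖ * ‖z‖ ≤ 1 * ‖z‖ := by
              apply mul_le_mul_of_nonneg_right _ (norm_nonneg z)
              rw [Real.norm_eq_abs, abs_of_nonneg hb]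
              linarith
          _ = ‖z‖ := one_mul _
      have hdecomp : fderiv ℝ f w = fderiv ℝ f 0 + (fderiv ℝ f w - fderiv ℝ f 0) := by abel
      calc ‖fderiv ℝ f w‖ = ‖fderiv ℝ f 0 + (fderiv ℝ f w - fderiv ℝ f 0)‖ := by
            rw [← hdecomp]
        _ ≤ ‖fderiv ℝ f 0‖ + ‖fderiv ℝ f w - fderiv ℝ f 0‖ := norm_add_le _ _
        _ ≤ ‖fderiv ℝ f 0‖ + ‖w - 0‖ ^ (s - 1) := by
            have := hlip' w 0
            linarith
        _ ≤ ‖fderiv ℝ f 0‖ + ‖z‖ ^ (s - 1) := by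
            rw [sub_zero]
            have := Real.rpow_le_rpow (norm_nonneg w) hwle (by linarith : (0:ℝ) ≤ s - 1)
            linarith
    have hmvt := Convex.norm_image_sub_le_of_norm_fderiv_le
      (fun w _ => (hdf w)) hseg (convex_segment _ _)
      (left_mem_segment ℝ (0:H) z) (right_mem_segment ℝ (0:H) z)
    rw [sub_zero] at hmvt
    have hpow : ‖z‖ ^ (s - 1) * ‖z‖ = ‖z‖ ^ s := by
      rcases eq_or_lt_of_le (norm_nonneg z) with h0 | h0
      · rw [← h0, Real.zero_rpow (by linarith : s - 1 ≠ 0), Real.zero_rpow hs0.ne', zero_mul]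
      · have h2 : ‖z‖ ^ (s - 1) * ‖z‖ ^ (1:ℝ) = ‖z‖ ^ (s - 1 + 1) := (Real.rpow_add h0 _ _).symm
        rw [Real.rpow_one] at h2
        rw [h2, sub_add_cancel]
    calc |f z| = |f 0 + (f z - f 0)| := by ring_nf
      _ ≤ |f 0| + |f z - f 0| := abs_add_le _ _
      _ ≤ |f 0| + (‖fderiv ℝ f 0‖ + ‖z‖ ^ (s - 1)) * ‖z‖ := by
          rw [← Real.norm_eq_abs (f z - f 0)]
          linarith
      _ = |f 0| + ‖fderiv ℝ f 0‖ * ‖z‖ + ‖z‖ ^ (s - 1) * ‖z‖ := by ring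
      _ = |f 0| + ‖fderiv ℝ f 0‖ * ‖z‖ + ‖z‖ ^ s := by rw [hpow]

lemma st17_eval_int {n : ℕ} (κ : Fin (n+1) → Measure H) [∀ r, IsProbabilityMeasure (κ r)]
    (k : Fin (n+1)) {ψ : H → ℝ} (hψ : Integrable ψ (κ k)) :
    Integrable (fun x : Fin (n+1) → H => ψ (x k)) (Measure.pi κ) := by
  have hmp := measurePreserving_piFinSuccAbove κ k
  have h1 : Integrable (fun q : H × (Fin n → H) => ψ q.1)
      ((κ k).prod (Measure.pi fun j => κ (k.succAbove j))) := by
    have h2 := hψ.mul_prod (integrable_const (μ := Measure.pi fun j => κ (k.succAbove j)) (1:ℝ))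
    simpa using h2
  have h3 := (hmp.integrable_comp_emb
    (MeasurableEquiv.piFinSuccAbove (fun _ : Fin (n+1) => H) k).measurableEmbedding
    (g := fun q : H × (Fin n → H) => ψ q.1)).mpr h1
  have h4 : (fun x : Fin (n+1) → H => ψ (x k)) =
      (fun q : H × (Fin n → H) => ψ q.1) ∘
        (MeasurableEquiv.piFinSuccAbove (fun _ : Fin (n+1) => H) k) := by
    funext x
    rfl
  rw [h4]
  exact h3


lemma st17_intC {Ω : Type*} [MeasurableSpace Ω] (P : Measure Ω) [IsProbabilityMeasure P]
    (s : ℝ) (hs0 : 0 < s) (hs2 : s ≤ 2)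
    {n : ℕ} (A : Fin (n+1) → Ω → (H →L[ℝ] H))
    (hAmeas : ∀ r, Measurable fun p : Ω × H => A r p.1 p.2)
    (hAint : ∀ r, Integrable (fun ω => ‖A r ω‖ ^ s) P)
    (b : Ω → H) (hb : Measurable b) (hbint : Integrable (fun ω => ‖b ω‖ ^ s) P)
    (κ : Fin (n+1) → Measure H) [∀ r, IsProbabilityMeasure (κ r)]
    (hκ : ∀ r, Integrable (fun x : H => ‖x‖ ^ s) (κ r))
    (f : H → ℝ) (hf : ContDiff ℝ (⌈s⌉₊ - 1) f)
    (hlip : ∀ x y : H, ‖iteratedFDeriv ℝ (⌈s⌉₊ - 1) f x - iteratedFDeriv ℝ (⌈s⌉₊ - 1) f y‖ ≤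
          ‖x - y‖ ^ (s - (⌈s⌉₊ - 1 : ℕ))) :
    Integrable (fun p : Ω × (Fin (n+1) → H) => f ((∑ r, A r p.1 (p.2 r)) + b p.1))
      (P.prod (Measure.pi κ)) := by
  obtain ⟨C1, C2, hC1, hC2, hC2s, hbound⟩ := st17_growth s hs0 hs2 f hf hlip
  set g : Ω × (Fin (n+1) → H) → H := fun p => (∑ r, A r p.1 (p.2 r)) + b p.1 with hgdef
  have hgmeas : Measurable g := by
    apply Measurable.add
    · exact Finset.measurable_sum Finset.univ fun r _ =>
        (hAmeas r).comp (measurable_fst.prodMk ((measurable_pi_apply r).comp measurable_snd))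
    · exact hb.comp measurable_fst
  have hfg : AEStronglyMeasurable (fun p : Ω × (Fin (n+1) → H) => f (g p))
      (P.prod (Measure.pi κ)) :=
    ((hf.continuous.measurable.comp hgmeas).aestronglyMeasurable)
  obtain ⟨K, hK1, hKs⟩ := st17_rpow_sum s hs0 (Finset.univ : Finset (Fin (n+1)))
  have hK0 : (0:ℝ) ≤ K := le_trans zero_le_one hK1
  have h2s : (0:ℝ) ≤ 2 ^ s := Real.rpow_nonneg (by norm_num) s
  set S : Ω × (Fin (n+1) → H) → ℝ := fun p => (∑ r, ‖A r p.1‖ * ‖p.2 r‖) + ‖b p.1‖ with hSdef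
  have hS0 : ∀ p, 0 ≤ S p := by
    intro p
    apply add_nonneg _ (norm_nonneg _)
    exact Finset.sum_nonneg fun r _ => mul_nonneg (norm_nonneg _) (norm_nonneg _)
  have hgle : ∀ p, ‖g p‖ ≤ S p := by
    intro p
    refine le_trans (norm_add_le _ _) (add_le_add_left ?_ _)
    refine le_trans (norm_sum_le _ _) (Finset.sum_le_sum fun r _ => (A r p.1).le_opNorm _)
  set Φ : Ω × (Fin (n+1) → H) → ℝ := fun p =>
      (C1 + C2 * S p) + ((2 ^ s * K) * (∑ r, ‖A r p.1‖ ^ s * ‖p.2 r‖ ^ s)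
        + 2 ^ s * ‖b p.1‖ ^ s) with hΦdef
  have hΦint : Integrable Φ (P.prod (Measure.pi κ)) := by
    apply Integrable.add
    · apply Integrable.add (integrable_const C1)
      rcases le_or_gt s 1 with hs1 | hs1
      · rw [hC2s hs1]
        simp only [zero_mul]
        exact integrable_const 0
      · apply Integrable.const_mul
        apply Integrable.add
        · apply integrable_finset_sum
          intro r _
          exact (st17_int_of_rpow hs0 hs1.le (fun _ => norm_nonneg _) (hAint r)).mul_prod
            (st17_eval_int κ r (st17_int_of_rpow hs0 hs1.le (fun _ => norm_nonneg _) (hκ r)))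
        · have h5 := (st17_int_of_rpow hs0 hs1.le (fun _ => norm_nonneg _) hbint).mul_prod
            (integrable_const (μ := Measure.pi κ) (1:ℝ))
          simpa using h5
    · apply Integrable.add
      · apply Integrable.const_mul
        apply integrable_finset_sum
        intro r _
        exact (hAint r).mul_prod (st17_eval_int κ r (hκ r))
      · apply Integrable.const_mul
        have h5 := hbint.mul_prod (integrable_const (μ := Measure.pi κ) (1:ℝ))
        simpa using h5
  refine hΦint.mono' hfg (Filter.Eventually.of_forall fun p => ?_)
  rw [Real.norm_eq_abs]
  have h1 : |f (g p)| ≤ C1 + C2 * ‖g p‖ + ‖g p‖ ^ s := hbound (g p)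
  have h2 : C2 * ‖g p‖ ≤ C2 * S p := mul_le_mul_of_nonneg_left (hgle p) hC2
  have h3 : ‖g p‖ ^ s ≤ (2 ^ s * K) * (∑ r, ‖A r p.1‖ ^ s * ‖p.2 r‖ ^ s)
      + 2 ^ s * ‖b p.1‖ ^ s := by
    have hsum0 : 0 ≤ ∑ r, ‖A r p.1‖ * ‖p.2 r‖ :=
      Finset.sum_nonneg fun r _ => mul_nonneg (norm_nonneg _) (norm_nonneg _)
    have e1 : ‖g p‖ ^ s ≤ S p ^ s := Real.rpow_le_rpow (norm_nonneg _) (hgle p) hs0.le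
    have e2 : S p ^ s ≤ 2 ^ s * ((∑ r, ‖A r p.1‖ * ‖p.2 r‖) ^ s + ‖b p.1‖ ^ s) :=
      st17_rpow_two s hs0 hsum0 (norm_nonneg _)
    have e3 : (∑ r, ‖A r p.1‖ * ‖p.2 r‖) ^ s ≤ K * ∑ r, (‖A r p.1‖ * ‖p.2 r‖) ^ s :=
      hKs _ (fun r => mul_nonneg (norm_nonneg _) (norm_nonneg _))
    have e4 : (∑ r, (‖A r p.1‖ * ‖p.2 r‖) ^ s) = ∑ r, ‖A r p.1‖ ^ s * ‖p.2 r‖ ^ s :=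
      Finset.sum_congr rfl fun r _ => Real.mul_rpow (norm_nonneg _) (norm_nonneg _)
    rw [e4] at e3
    nlinarith [Real.rpow_nonneg (norm_nonneg (b p.1)) s]
  calc |f (g p)| ≤ C1 + C2 * ‖g p‖ + ‖g p‖ ^ s := h1
    _ ≤ (C1 + C2 * S p) + ((2 ^ s * K) * (∑ r, ‖A r p.1‖ ^ s * ‖p.2 r‖ ^ s)
        + 2 ^ s * ‖b p.1‖ ^ s) := by linarith
    _ = Φ p := rfl



lemma st17_step {Ω : Type*} [MeasurableSpace Ω] (P : Measure Ω) [IsProbabilityMeasure P]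
    (s : ℝ) (hs0 : 0 < s) (hs2 : s ≤ 2)
    {n : ℕ} (A : Fin (n+1) → Ω → (H →L[ℝ] H))
    (hAmeas : ∀ r, Measurable fun p : Ω × H => A r p.1 p.2)
    (hAint : ∀ r, Integrable (fun ω => ‖A r ω‖ ^ s) P)
    (b : Ω → H) (hb : Measurable b) (hbint : Integrable (fun ω => ‖b ω‖ ^ s) P)
    (κ : Fin (n+1) → Measure H) [∀ r, IsProbabilityMeasure (κ r)]
    (hκ : ∀ r, Integrable (fun x : H => ‖x‖ ^ s) (κ r))
    (k : Fin (n+1)) (ρ : Measure H) [IsProbabilityMeasure ρ]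
    (hρ : Integrable (fun x : H => ‖x‖ ^ s) ρ)
    (D : ℝ)
    (hD : ∀ f : H → ℝ, ContDiff ℝ (⌈s⌉₊ - 1) f →
        (∀ x y : H, ‖iteratedFDeriv ℝ (⌈s⌉₊ - 1) f x - iteratedFDeriv ℝ (⌈s⌉₊ - 1) f y‖ ≤
          ‖x - y‖ ^ (s - (⌈s⌉₊ - 1 : ℕ))) →
        |∫ x, f x ∂(κ k) - ∫ x, f x ∂ρ| ≤ D)
    (f : H → ℝ) (hf : ContDiff ℝ (⌈s⌉₊ - 1) f)
    (hlip : ∀ x y : H, ‖iteratedFDeriv ℝ (⌈s⌉₊ - 1) f x - iteratedFDeriv ℝ (⌈s⌉₊ - 1) f y‖ ≤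
          ‖x - y‖ ^ (s - (⌈s⌉₊ - 1 : ℕ))) :
    |(∫ p : Ω × (Fin (n+1) → H), f ((∑ r, A r p.1 (p.2 r)) + b p.1) ∂(P.prod (Measure.pi κ)))
      - ∫ p : Ω × (Fin (n+1) → H), f ((∑ r, A r p.1 (p.2 r)) + b p.1)
          ∂(P.prod (Measure.pi (Function.update κ k ρ)))|
      ≤ (∫ ω, ‖A k ω‖ ^ s ∂P) * D := by
  classical
  haveI hupdP : ∀ r, IsProbabilityMeasure (Function.update κ k ρ r) := by
    intro r
    rcases eq_or_ne r k with rfl | hr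
    · rw [Function.update_self]; infer_instance
    · rw [Function.update_of_ne hr]; infer_instance
  have hupdmom : ∀ r, Integrable (fun x : H => ‖x‖ ^ s) (Function.update κ k ρ r) := by
    intro r
    rcases eq_or_ne r k with rfl | hr
    · rw [Function.update_self]; exact hρ
    · rw [Function.update_of_ne hr]; exact hκ r
  set π' : Measure (Fin n → H) := Measure.pi fun j => κ (k.succAbove j) with hπ'
  set e := MeasurableEquiv.piFinSuccAbove (fun _ : Fin (n+1) => H) k with he
  have hmp1 : MeasurePreserving e (Measure.pi κ) ((κ k).prod π') :=
    measurePreserving_piFinSuccAbove κ k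
  have hupd : (fun j => Function.update κ k ρ (k.succAbove j)) = fun j => κ (k.succAbove j) :=
    funext fun j => Function.update_of_ne (Fin.succAbove_ne k j) _ _
  have hmp2 : MeasurePreserving e (Measure.pi (Function.update κ k ρ)) (ρ.prod π') := by
    have h := measurePreserving_piFinSuccAbove (Function.update κ k ρ) k
    rwa [Function.update_self, hupd] at h
  set T : Ω × (Fin (n+1) → H) → (Ω × (Fin n → H)) × H :=
    fun p => ((p.1, (e p.2).2), (e p.2).1) with hT
  have hTmeas : Measurable T := by
    refine Measurable.prodMk (Measurable.prodMk measurable_fst ?_) ?_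
    · exact measurable_snd.comp (e.measurable.comp measurable_snd)
    · exact measurable_fst.comp (e.measurable.comp measurable_snd)
  have hstage : ∀ (σ : Measure H), IsProbabilityMeasure σ →
      MeasurePreserving (fun q : Ω × (H × (Fin n → H)) => ((q.1, q.2.2), q.2.1))
        (P.prod (σ.prod π')) ((P.prod π').prod σ) := by
    intro σ hσ
    have h1 : MeasurePreserving
        (Prod.map (id : Ω → Ω) (Prod.swap : H × (Fin n → H) → (Fin n → H) × H))
        (P.prod (σ.prod π')) (P.prod (π'.prod σ)) :=
      (MeasurePreserving.id P).prod Measure.measurePreserving_swap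
    have h2 : MeasurePreserving
        (MeasurableEquiv.prodAssoc.symm : Ω × ((Fin n → H) × H) ≃ᵐ (Ω × (Fin n → H)) × H)
        (P.prod (π'.prod σ)) ((P.prod π').prod σ) :=
      (measurePreserving_prodAssoc P π' σ).symm MeasurableEquiv.prodAssoc
    have h3 := h2.comp h1
    have h4 : ((MeasurableEquiv.prodAssoc.symm :
          Ω × ((Fin n → H) × H) ≃ᵐ (Ω × (Fin n → H)) × H) ∘
        (Prod.map (id : Ω → Ω) (Prod.swap : H × (Fin n → H) → (Fin n → H) × H)))
        = fun q : Ω × (H × (Fin n → H)) => ((q.1, q.2.2), q.2.1) := by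
      funext q
      rfl
    rwa [h4] at h3
  have hTκ : MeasurePreserving T (P.prod (Measure.pi κ)) ((P.prod π').prod (κ k)) := by
    have h1 : MeasurePreserving (Prod.map (id : Ω → Ω) e)
        (P.prod (Measure.pi κ)) (P.prod ((κ k).prod π')) :=
      (MeasurePreserving.id P).prod hmp1
    have h3 := (hstage (κ k) inferInstance).comp h1
    have h4 : ((fun q : Ω × (H × (Fin n → H)) => ((q.1, q.2.2), q.2.1)) ∘
        (Prod.map (id : Ω → Ω) e)) = T := by
      funext p
      rfl
    rwa [h4] at h3
  have hTρ : MeasurePreserving T (P.prod (Measure.pi (Function.update κ k ρ)))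
      ((P.prod π').prod ρ) := by
    have h1 : MeasurePreserving (Prod.map (id : Ω → Ω) e)
        (P.prod (Measure.pi (Function.update κ k ρ))) (P.prod (ρ.prod π')) :=
      (MeasurePreserving.id P).prod hmp2
    have h3 := (hstage ρ inferInstance).comp h1
    have h4 : ((fun q : Ω × (H × (Fin n → H)) => ((q.1, q.2.2), q.2.1)) ∘
        (Prod.map (id : Ω → Ω) e)) = T := by
      funext p
      rfl
    rwa [h4] at h3
  set c : Ω × (Fin n → H) → H := fun q => (∑ j, A (k.succAbove j) q.1 (q.2 j)) + b q.1 with hc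
  set F : (Ω × (Fin n → H)) × H → ℝ := fun q => f (A k q.1.1 q.2 + c q.1) with hFdef
  have hFT : ∀ p : Ω × (Fin (n+1) → H), F (T p) = f ((∑ r, A r p.1 (p.2 r)) + b p.1) := by
    intro p
    have h3 : (∑ r, A r p.1 (p.2 r))
        = A k p.1 (p.2 k) + ∑ j, A (k.succAbove j) p.1 (p.2 (k.succAbove j)) :=
      Fin.sum_univ_succAbove (fun r => A r p.1 (p.2 r)) k
    calc F (T p) = f (A k p.1 (p.2 k)
        + ((∑ j, A (k.succAbove j) p.1 (p.2 (k.succAbove j))) + b p.1)) := rfl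
      _ = f ((∑ r, A r p.1 (p.2 r)) + b p.1) := by rw [h3, add_assoc]
  have hFmeas : Measurable F := by
    apply hf.continuous.measurable.comp
    apply Measurable.add
    · exact (hAmeas k).comp ((measurable_fst.comp measurable_fst).prodMk measurable_snd)
    · have hcm : Measurable c := by
        apply Measurable.add
        · exact Finset.measurable_sum Finset.univ fun j _ =>
            (hAmeas (k.succAbove j)).comp
              (measurable_fst.prodMk ((measurable_pi_apply j).comp measurable_snd))
        · exact hb.comp measurable_fst
      exact hcm.comp measurable_fst
  have hFint1 : Integrable F ((P.prod π').prod (κ k)) := by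
    rw [← hTκ.map_eq]
    refine (integrable_map_measure hFmeas.aestronglyMeasurable hTmeas.aemeasurable).mpr ?_
    have h5 : (F ∘ T) = fun p : Ω × (Fin (n+1) → H) => f ((∑ r, A r p.1 (p.2 r)) + b p.1) :=
      funext hFT
    rw [h5]
    exact st17_intC P s hs0 hs2 A hAmeas hAint b hb hbint κ hκ f hf hlip
  have hFint2 : Integrable F ((P.prod π').prod ρ) := by
    rw [← hTρ.map_eq]
    refine (integrable_map_measure hFmeas.aestronglyMeasurable hTmeas.aemeasurable).mpr ?_
    have h5 : (F ∘ T) = fun p : Ω × (Fin (n+1) → H) => f ((∑ r, A r p.1 (p.2 r)) + b p.1) :=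
      funext hFT
    rw [h5]
    exact st17_intC P s hs0 hs2 A hAmeas hAint b hb hbint
      (Function.update κ k ρ) hupdmom f hf hlip
  have hI1 : (∫ p : Ω × (Fin (n+1) → H), f ((∑ r, A r p.1 (p.2 r)) + b p.1)
      ∂(P.prod (Measure.pi κ))) = ∫ q, F q ∂((P.prod π').prod (κ k)) := by
    calc (∫ p : Ω × (Fin (n+1) → H), f ((∑ r, A r p.1 (p.2 r)) + b p.1)
          ∂(P.prod (Measure.pi κ)))
        = ∫ p, F (T p) ∂(P.prod (Measure.pi κ)) :=
          integral_congr_ae (Filter.Eventually.of_forall fun p => (hFT p).symm)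
      _ = ∫ q, F q ∂((P.prod π').prod (κ k)) := by
          rw [← hTκ.map_eq, integral_map hTmeas.aemeasurable hFmeas.aestronglyMeasurable]
  have hI2 : (∫ p : Ω × (Fin (n+1) → H), f ((∑ r, A r p.1 (p.2 r)) + b p.1)
      ∂(P.prod (Measure.pi (Function.update κ k ρ))))
      = ∫ q, F q ∂((P.prod π').prod ρ) := by
    calc (∫ p : Ω × (Fin (n+1) → H), f ((∑ r, A r p.1 (p.2 r)) + b p.1)
          ∂(P.prod (Measure.pi (Function.update κ k ρ))))
        = ∫ p, F (T p) ∂(P.prod (Measure.pi (Function.update κ k ρ))) :=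
          integral_congr_ae (Filter.Eventually.of_forall fun p => (hFT p).symm)
      _ = ∫ q, F q ∂((P.prod π').prod ρ) := by
          rw [← hTρ.map_eq, integral_map hTmeas.aemeasurable hFmeas.aestronglyMeasurable]
  rw [hI1, hI2, integral_prod _ hFint1, integral_prod _ hFint2,
    ← integral_sub hFint1.integral_prod_left hFint2.integral_prod_left]
  have hkey : ∀ q : Ω × (Fin n → H),
      |(∫ x, F (q, x) ∂(κ k)) - ∫ x, F (q, x) ∂ρ| ≤ ‖A k q.1‖ ^ s * D := by
    intro q
    exact st17_keyB s hs0 hs2 (κ k) ρ D hD f hf hlip (A k q.1) (c q)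
  have hbnd : Integrable (fun q : Ω × (Fin n → H) => ‖A k q.1‖ ^ s * D) (P.prod π') := by
    apply Integrable.mul_const
    have h5 := (hAint k).mul_prod (integrable_const (μ := π') (1:ℝ))
    simpa using h5
  calc |∫ q, ((∫ x, F (q, x) ∂(κ k)) - ∫ x, F (q, x) ∂ρ) ∂(P.prod π')|
      ≤ ∫ q, |(∫ x, F (q, x) ∂(κ k)) - ∫ x, F (q, x) ∂ρ| ∂(P.prod π') := by
        have h6 := norm_integral_le_integral_norm
          (μ := P.prod π') (fun q => (∫ x, F (q, x) ∂(κ k)) - ∫ x, F (q, x) ∂ρ)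
        simpa [Real.norm_eq_abs] using h6
    _ ≤ ∫ q, ‖A k q.1‖ ^ s * D ∂(P.prod π') :=
        integral_mono_of_nonneg (Filter.Eventually.of_forall fun q => abs_nonneg _) hbnd
          (Filter.Eventually.of_forall hkey)
    _ = (∫ q : Ω × (Fin n → H), ‖A k q.1‖ ^ s ∂(P.prod π')) * D := integral_mul_const D _
    _ = (∫ ω, ‖A k ω‖ ^ s ∂P) * D := by
        congr 1
        have hmfst : (P.prod π').map Prod.fst = P := by
          rw [Measure.map_fst_prod]
          simp
        have h7 := integral_map (μ := P.prod π') (φ := Prod.fst)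
          measurable_fst.aemeasurable
          (f := fun ω => ‖A k ω‖ ^ s) (by rw [hmfst]; exact (hAint k).aestronglyMeasurable)
        rw [hmfst] at h7
        exact h7.symm



end St17Aux


/-- Lemma 6.2: on a separable Hilbert space `H`, the map
`T(L(Z)) = L(∑_r A_r*(Z^{(r)}) + b*)`, with `(A_1*,…,A_m*,b*)` independent of the
i.i.d. copies `Z^{(r)}` of `Z` (realized here via the product measure
`P ⊗ μ^{⊗m}`), is a strict contraction in the Zolotarev metric `ζ_s`
(`0 < s ≤ 2`) on laws with finite `s`-th moment (centered when `1 < s ≤ 2`),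
with contraction factor `E ∑_r ‖A_r*‖_op^s < 1`: for any bound `D` on
`ζ_s(μ,ν)` (i.e., on `|∫ f dμ - ∫ f dν|` over `f ∈ F_s`),
`ζ_s(Tμ, Tν) ≤ (E ∑_r ‖A_r*‖_op^s)·D`. -/
theorem stmt17 {H : Type*} [NormedAddCommGroup H] [InnerProductSpace ℝ H]
    [CompleteSpace H] [TopologicalSpace.SeparableSpace H]
    [MeasurableSpace H] [BorelSpace H]
    (s : ℝ) (hs0 : 0 < s) (hs2 : s ≤ 2)
    (mm : ℕ)
    {Ω : Type*} [MeasurableSpace Ω] (P : Measure Ω) [IsProbabilityMeasure P]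
    (A : Fin mm → Ω → (H →L[ℝ] H))
    (hAmeas : ∀ r, Measurable fun p : Ω × H => A r p.1 p.2)
    (hAint : ∀ r, Integrable (fun ω => ‖A r ω‖ ^ s) P)
    (b : Ω → H) (hb : Measurable b)
    (hbint : Integrable (fun ω => ‖b ω‖ ^ s) P)
    (hbcent : 1 < s → ∫ ω, b ω ∂P = 0)
    (hcontr : ∫ ω, ∑ r, ‖A r ω‖ ^ s ∂P < 1)
    (μ ν : Measure H) [IsProbabilityMeasure μ] [IsProbabilityMeasure ν]
    (hμmom : ∫⁻ x, (‖x‖₊ : ℝ≥0∞) ^ s ∂μ < ⊤)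
    (hνmom : ∫⁻ x, (‖x‖₊ : ℝ≥0∞) ^ s ∂ν < ⊤)
    (hμcent : 1 < s → ∫ x, x ∂μ = 0)
    (hνcent : 1 < s → ∫ x, x ∂ν = 0) :
    ∀ D : ℝ, 0 ≤ D →
      (∀ f : H → ℝ, ContDiff ℝ (⌈s⌉₊ - 1) f →
        (∀ x y : H, ‖iteratedFDeriv ℝ (⌈s⌉₊ - 1) f x - iteratedFDeriv ℝ (⌈s⌉₊ - 1) f y‖ ≤
          ‖x - y‖ ^ (s - (⌈s⌉₊ - 1 : ℕ))) →
        |∫ x, f x ∂μ - ∫ x, f x ∂ν| ≤ D) →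
      ∀ f : H → ℝ, ContDiff ℝ (⌈s⌉₊ - 1) f →
        (∀ x y : H, ‖iteratedFDeriv ℝ (⌈s⌉₊ - 1) f x - iteratedFDeriv ℝ (⌈s⌉₊ - 1) f y‖ ≤
          ‖x - y‖ ^ (s - (⌈s⌉₊ - 1 : ℕ))) →
        |(∫ x, f x ∂(Measure.map
              (fun p : Ω × (Fin mm → H) => (∑ r, A r p.1 (p.2 r)) + b p.1)
              (P.prod (Measure.pi fun _ : Fin mm => μ)))) -
          ∫ x, f x ∂(Measure.map
              (fun p : Ω × (Fin mm → H) => (∑ r, A r p.1 (p.2 r)) + b p.1)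
              (P.prod (Measure.pi fun _ : Fin mm => ν)))| ≤
          (∫ ω, ∑ r, ‖A r ω‖ ^ s ∂P) * D := by
  intro D hD0 hD f hf hlip
  cases mm with
  | zero =>
    have hκeq : (fun _ : Fin 0 => μ) = (fun _ : Fin 0 => ν) := funext fun r => r.elim0
    rw [hκeq, sub_self, abs_zero]
    have hz : ∀ ω : Ω, (∑ r : Fin 0, ‖A r ω‖ ^ s) = 0 := fun ω => by simp
    simp only [hz, integral_zero, zero_mul, le_refl]
  | succ n =>
    classical
    have hgmeas : Measurable (fun p : Ω × (Fin (n+1) → H) =>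
        (∑ r, A r p.1 (p.2 r)) + b p.1) := by
      apply Measurable.add
      · exact Finset.measurable_sum Finset.univ fun r _ =>
          (hAmeas r).comp (measurable_fst.prodMk ((measurable_pi_apply r).comp measurable_snd))
      · exact hb.comp measurable_fst
    have hmap : ∀ m0 : Measure (Ω × (Fin (n+1) → H)),
        (∫ x, f x ∂(Measure.map
          (fun p : Ω × (Fin (n+1) → H) => (∑ r, A r p.1 (p.2 r)) + b p.1) m0))
        = ∫ p : Ω × (Fin (n+1) → H), f ((∑ r, A r p.1 (p.2 r)) + b p.1) ∂m0 :=
      fun m0 => integral_map hgmeas.aemeasurable hf.continuous.aestronglyMeasurable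
    rw [hmap, hmap]
    have hμint : Integrable (fun x : H => ‖x‖ ^ s) μ := st17_mom hs0 μ hμmom
    have hνint : Integrable (fun x : H => ‖x‖ ^ s) ν := st17_mom hs0 ν hνmom
    set κs : ℕ → Fin (n+1) → Measure H := fun j r => if (r : ℕ) < j then ν else μ with hκs
    have hκsP : ∀ j r, IsProbabilityMeasure (κs j r) := by
      intro j r
      rw [hκs]
      dsimp only
      split <;> infer_instance
    have hκsmom : ∀ j r, Integrable (fun x : H => ‖x‖ ^ s) (κs j r) := by
      intro j r
      rw [hκs]
      dsimp only
      split
      · exact hνint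
      · exact hμint
    set I : (Fin (n+1) → Measure H) → ℝ := fun κ =>
      ∫ p : Ω × (Fin (n+1) → H), f ((∑ r, A r p.1 (p.2 r)) + b p.1)
        ∂(P.prod (Measure.pi κ)) with hI
    set cst : Fin (n+1) → ℝ := fun r => ∫ ω, ‖A r ω‖ ^ s ∂P with hcst
    have hcst0 : ∀ r, 0 ≤ cst r := fun r =>
      integral_nonneg fun ω => Real.rpow_nonneg (norm_nonneg _) s
    have main : ∀ j : ℕ, j ≤ n + 1 →
        |I (κs 0) - I (κs j)| ≤ (∑ r : Fin (n+1), if (r : ℕ) < j then cst r else 0) * D := by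
      intro j
      induction j with
      | zero =>
        intro _
        simp
      | succ j ih =>
        intro hj1
        have hj : j < n + 1 := by omega
        have ihh := ih (by omega)
        set k : Fin (n+1) := ⟨j, hj⟩ with hk
        have hkval : (k : ℕ) = j := rfl
        have hupdate : κs (j+1) = Function.update (κs j) k ν := by
          funext r
          rcases eq_or_ne r k with rfl | hr
          · rw [Function.update_self, hκs]
            dsimp only
            rw [if_pos (by omega : (k:ℕ) < j + 1)]
          · rw [Function.update_of_ne hr, hκs]
            dsimp only
            have hrj : (r : ℕ) ≠ j := fun h => hr (Fin.ext (by rw [h, hkval]))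
            by_cases h : (r : ℕ) < j
            · rw [if_pos (by omega : (r:ℕ) < j + 1), if_pos h]
            · rw [if_neg (by omega : ¬ (r:ℕ) < j + 1), if_neg h]
        haveI : ∀ r, IsProbabilityMeasure (κs j r) := hκsP j
        have hkμ : κs j k = μ := by
          rw [hκs]
          dsimp only
          rw [if_neg (by omega : ¬ (k:ℕ) < j)]
        have hDk : ∀ g : H → ℝ, ContDiff ℝ (⌈s⌉₊ - 1) g →
            (∀ x y : H, ‖iteratedFDeriv ℝ (⌈s⌉₊ - 1) g x - iteratedFDeriv ℝ (⌈s⌉₊ - 1) g y‖ ≤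
              ‖x - y‖ ^ (s - (⌈s⌉₊ - 1 : ℕ))) →
            |∫ x, g x ∂(κs j k) - ∫ x, g x ∂ν| ≤ D := by
          rw [hkμ]
          exact hD
        have hstep := st17_step P s hs0 hs2 A hAmeas hAint b hb hbint
          (κs j) (hκsmom j) k ν hνint D hDk f hf hlip
        rw [← hupdate] at hstep
        have hsum : (∑ r : Fin (n+1), if (r : ℕ) < j + 1 then cst r else 0)
            = (∑ r : Fin (n+1), if (r : ℕ) < j then cst r else 0) + cst k := by
          have hptw : ∀ r : Fin (n+1), (if (r : ℕ) < j + 1 then cst r else 0)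
              = (if (r : ℕ) < j then cst r else 0) + (if r = k then cst r else 0) := by
            intro r
            rcases eq_or_ne r k with rfl | hr
            · rw [if_pos rfl, if_pos (show (k:ℕ) < j + 1 by rw [hkval]; omega),
                if_neg (show ¬ (k:ℕ) < j by rw [hkval]; omega)]
              ring
            · have hrj : (r : ℕ) ≠ j := fun h => hr (Fin.ext (by rw [h, hkval]))
              rw [if_neg hr]
              by_cases h : (r : ℕ) < j
              · rw [if_pos (by omega : (r:ℕ) < j + 1), if_pos h]
                ring
              · rw [if_neg (by omega : ¬ (r:ℕ) < j + 1), if_neg h]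
                ring
          rw [Finset.sum_congr rfl fun r _ => hptw r, Finset.sum_add_distrib,
            Finset.sum_ite_eq' Finset.univ k (fun r => cst r)]
          simp
        rw [hsum, add_mul]
        calc |I (κs 0) - I (κs (j+1))|
            ≤ |I (κs 0) - I (κs j)| + |I (κs j) - I (κs (j+1))| := abs_sub_le _ _ _
          _ ≤ (∑ r : Fin (n+1), if (r : ℕ) < j then cst r else 0) * D + cst k * D :=
              add_le_add ihh hstep
    have hfinal := main (n+1) le_rfl
    have h0 : κs 0 = fun _ => μ := by
      funext r
      rw [hκs]
      dsimp only
      rw [if_neg (by omega)]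
    have hn1 : κs (n+1) = fun _ => ν := by
      funext r
      rw [hκs]
      dsimp only
      rw [if_pos r.isLt]
    have hsumall : (∑ r : Fin (n+1), if (r : ℕ) < n + 1 then cst r else 0)
        = ∑ r, cst r := Finset.sum_congr rfl fun r _ => if_pos r.isLt
    rw [h0, hn1, hsumall] at hfinal
    have hint : (∫ ω, ∑ r, ‖A r ω‖ ^ s ∂P) = ∑ r, cst r :=
      integral_finset_sum Finset.univ fun r _ => hAint r
    rw [hint]
    exact hfinal
end

section
/- Let λ(z) be a bounded function on a parameter set K, and for z ∈ K let φ_z be analytic on a Δ-domain Δ = Δ(R, δ) with φ_z(ζ) = O(1) uniformly for |1-ζ| ≥ η and φ_z(ζ) = O(|1-ζ|^{-α} |log|1-ζ||^d) uniformly for |1-ζ| ≤ η (z ∈ K, ζ ∈ Δ), where α ∈ ℝ, d ≥ 0, 0 < η < min(1/2, R-1). Then the function Ψ_z(ζ) := Ψ_z(0)(1-ζ)^{-λ(z)} + (1-ζ)^{-λ(z)} ∫_0^ζ (1-w)^{λ(z)-1} φ_z(w) dw, with Ψ_z(0) = O(1) uniformly in z, is analytic on Δ and satisfies Ψ_z(ζ)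 = O(1) for |1-ζ| ≥ η and Ψ_z(ζ) = O(|1-ζ|^{-max(α, Re λ(z))} |log|1-ζ||^{d+1}) for |1-ζ| ≤ η, uniformly in z ∈ K and ζ ∈ Δ. -/
open Complex Real Set

private lemma aux_rpow_le {B x e M : ℝ} (hB : 1 ≤ B) (hx : 0 < x) (hxB : x ≤ B)
    (hxB' : x⁻¹ ≤ B) (heM : |e| ≤ M) : x ^ e ≤ B ^ M := by
  have hM : 0 ≤ M := (abs_nonneg e).trans heM
  rcases le_or_gt 0 e with he | he
  · calc x ^ e ≤ B ^ e := Real.rpow_le_rpow hx.le hxB he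
      _ ≤ B ^ M := Real.rpow_le_rpow_of_exponent_le hB ((le_abs_self e).trans heM)
  · have h1 : x ^ e = (x⁻¹) ^ (-e) := by
      rw [Real.inv_rpow hx.le, ← Real.rpow_neg hx.le, neg_neg]
    rw [h1]
    calc (x⁻¹) ^ (-e) ≤ B ^ (-e) := Real.rpow_le_rpow (by positivity) hxB' (by linarith)
      _ ≤ B ^ M := Real.rpow_le_rpow_of_exponent_le hB ((neg_le_abs e).trans heM)

private lemma aux_cpow_norm {w c : ℂ} (hw : w ≠ 0) {L : ℝ} (hc : ‖c‖ ≤ L) :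
    ‖w ^ c‖ ≤ ‖w‖ ^ c.re * Real.exp (π * L) := by
  rw [Complex.norm_cpow_of_ne_zero hw, div_eq_mul_inv, ← Real.exp_neg]
  have h1 : -(w.arg * c.im) ≤ π * L := by
    have h2 : |w.arg * c.im| ≤ π * L := by
      rw [abs_mul]
      have := Complex.abs_arg_le_pi w
      have h3 : |c.im| ≤ L := (Complex.abs_im_le_norm c).trans hc
      have hL : 0 ≤ L := (norm_nonneg c).trans hc
      exact mul_le_mul this h3 (abs_nonneg _) Real.pi_pos.le
    linarith [neg_abs_le (w.arg * c.im)]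
  have hmono : Real.exp (-(w.arg * c.im)) ≤ Real.exp (π * L) := Real.exp_le_exp.2 h1
  have h0 : (0:ℝ) ≤ ‖w‖ ^ c.re := Real.rpow_nonneg (norm_nonneg w) _
  exact mul_le_mul_of_nonneg_left hmono h0

private lemma aux_abs_arg_neg {u : ℂ} (hu : u ≠ 0) : |Complex.arg (-u)| = π - |Complex.arg u| := by
  rcases lt_trichotomy u.im 0 with h | h | h
  · rw [Complex.arg_neg_eq_arg_add_pi_of_im_neg h]
    have h1 : u.arg < 0 := Complex.arg_neg_iff.2 h
    have h2 : -π < u.arg := Complex.neg_pi_lt_arg u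
    rw [_root_.abs_of_pos (by linarith), _root_.abs_of_neg h1]; ring
  · rcases lt_trichotomy u.re 0 with hr | hr | hr
    · have h1 : u.arg = π := Complex.arg_eq_pi_iff.2 ⟨hr, h⟩
      have h2 : (-u).arg = 0 := Complex.arg_eq_zero_iff.2 (by constructor <;> simp [h] <;> linarith)
      rw [h1, h2]
      simp [_root_.abs_of_pos Real.pi_pos]
    · exact absurd (Complex.ext (by simpa using hr) (by simpa using h)) hu
    · have h1 : u.arg = 0 := Complex.arg_eq_zero_iff.2 ⟨hr.le, h⟩
      have h2 : (-u).arg = π := Complex.arg_eq_pi_iff.2 (by simp [hr, h])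
      rw [h1, h2]; simp [_root_.abs_of_pos Real.pi_pos]
  · rw [Complex.arg_neg_eq_arg_sub_pi_of_im_pos h]
    have h1 : 0 < u.arg := by
      rcases lt_trichotomy u.arg 0 with hh | hh | hh
      · exact absurd (Complex.arg_neg_iff.1 hh) (by linarith)
      · exact absurd (Complex.arg_eq_zero_iff.1 hh).2 (by linarith)
      · exact hh
    have h2 : u.arg ≤ π := Complex.arg_le_pi u
    rw [_root_.abs_of_nonpos (by linarith), _root_.abs_of_pos h1]; ring

private lemma aux_arg_smul_exp {s ψ : ℝ} (hs : 0 < s) (hψ : |ψ| < π) :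
    Complex.arg ((s:ℂ) * Complex.exp (ψ * Complex.I)) = ψ := by
  rw [Complex.arg_real_mul _ hs, Complex.exp_mul_I, Complex.arg_cos_add_sin_mul_I]
  constructor
  · linarith [neg_abs_le ψ]
  · linarith [le_abs_self ψ]

private lemma aux_abs_smul_exp (s ψ : ℝ) (hs : 0 ≤ s) :
    ‖(s:ℂ) * Complex.exp (ψ * Complex.I)‖ = s := by
  rw [norm_mul, Complex.norm_real, Real.norm_eq_abs, Complex.norm_exp_ofReal_mul_I, _root_.abs_of_nonneg hs, mul_one]

private lemma aux_abs_sq (t s : ℝ) :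
    (‖1 - (t:ℂ) * Complex.exp (s * Complex.I)‖)^2 = 1 - 2*t*Real.cos s + t^2 := by
  rw [Complex.sq_norm, Complex.exp_mul_I]
  simp [Complex.normSq_apply, Complex.cos_ofReal_re, Complex.sin_ofReal_re]
  nlinarith [Real.sin_sq_add_cos_sq s]

set_option maxHeartbeats 1000000 in
/-- Theorem A.1(i), case `r = 1`: on a Δ-domain
`Δ(R,δ) = {ζ : |ζ| < R, |arg(ζ-1)| > π/2 - δ}`, if `λ(z)` is bounded,
`φ_z` is analytic on `Δ` with `φ_z = O(1)` for `|1-ζ| ≥ η` and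
`φ_z = O(|1-ζ|^{-α}|log|1-ζ||^d)` for `|1-ζ| ≤ η` uniformly in `z`, and `g_z`
is the primitive of `(1-w)^{λ(z)-1} φ_z(w)` vanishing at `0`, then
`Ψ_z(ζ) = Ψ_z(0)(1-ζ)^{-λ(z)} + (1-ζ)^{-λ(z)} g_z(ζ)` (with `Ψ_z(0) = O(1)`)
is analytic on `Δ` and satisfies, uniformly in `z` and `ζ ∈ Δ`, `Ψ_z(ζ) = O(1)`
for `|1-ζ| ≥ η` and `Ψ_z(ζ) = O(|1-ζ|^{-max(α, Re λ(z))}|log|1-ζ||^{d+1})`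
for `|1-ζ| ≤ η`. -/
theorem stmt18 (K : Type*) (R δ : ℝ) (hR : 1 < R) (hδ0 : 0 < δ) (hδ1 : δ < π / 2)
    (lam : K → ℂ) (L : ℝ) (hlam : ∀ z, ‖lam z‖ ≤ L)
    (α d η : ℝ) (hd : 0 ≤ d) (hη0 : 0 < η) (hη1 : η < 1 / 2) (hη2 : η < R - 1)
    (φ : K → ℂ → ℂ)
    (hφan : ∀ z, DifferentiableOn ℂ (φ z)
      {ζ : ℂ | ‖ζ‖ < R ∧ π / 2 - δ < |Complex.arg (ζ - 1)|})
    (Cφ : ℝ)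
    (hφ1 : ∀ z, ∀ ζ ∈ {ζ : ℂ | ‖ζ‖ < R ∧ π / 2 - δ < |Complex.arg (ζ - 1)|},
      η ≤ ‖1 - ζ‖ → ‖φ z ζ‖ ≤ Cφ)
    (hφ2 : ∀ z, ∀ ζ ∈ {ζ : ℂ | ‖ζ‖ < R ∧ π / 2 - δ < |Complex.arg (ζ - 1)|},
      ‖1 - ζ‖ ≤ η →
      ‖φ z ζ‖ ≤ Cφ * ‖1 - ζ‖ ^ (-α) * |Real.log (‖1 - ζ‖)| ^ d)
    (c : K → ℂ) (C₀ : ℝ) (hc : ∀ z, ‖c z‖ ≤ C₀)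
    (g : K → ℂ → ℂ) (hg0 : ∀ z, g z 0 = 0)
    (hg : ∀ z, ∀ ζ ∈ {ζ : ℂ | ‖ζ‖ < R ∧ π / 2 - δ < |Complex.arg (ζ - 1)|},
      HasDerivAt (g z) ((1 - ζ) ^ (lam z - 1) * φ z ζ) ζ) :
    (∀ z, DifferentiableOn ℂ
        (fun ζ => c z * (1 - ζ) ^ (-(lam z)) + (1 - ζ) ^ (-(lam z)) * g z ζ)
        {ζ : ℂ | ‖ζ‖ < R ∧ π / 2 - δ < |Complex.arg (ζ - 1)|}) ∧
    ∃ C : ℝ, 0 < C ∧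
      ∀ z, ∀ ζ ∈ {ζ : ℂ | ‖ζ‖ < R ∧ π / 2 - δ < |Complex.arg (ζ - 1)|},
        (η ≤ ‖1 - ζ‖ →
          ‖c z * (1 - ζ) ^ (-(lam z)) + (1 - ζ) ^ (-(lam z)) * g z ζ‖ ≤ C) ∧
        (‖1 - ζ‖ ≤ η →
          ‖c z * (1 - ζ) ^ (-(lam z)) + (1 - ζ) ^ (-(lam z)) * g z ζ‖ ≤
            C * ‖1 - ζ‖ ^ (-(max α (lam z).re)) *
              |Real.log (‖1 - ζ‖)| ^ (d + 1)) := by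
  set D : Set ℂ := {ζ : ℂ | ‖ζ‖ < R ∧ π / 2 - δ < |Complex.arg (ζ - 1)|} with hDdef
  have hπδ : 0 < π / 2 - δ := by linarith
  -- basic membership facts
  have hne1 : ∀ ζ ∈ D, (1:ℂ) - ζ ≠ 0 := by
    intro ζ hζ h
    have h2 : ζ - 1 = 0 := by linear_combination -h
    have := hζ.2
    rw [h2, Complex.arg_zero, abs_zero] at this
    linarith
  have habspos : ∀ ζ ∈ D, 0 < ‖1 - ζ‖ := by
    intro ζ hζ
    exact norm_pos_iff.2 (hne1 ζ hζ)
  have habs1R : ∀ ζ ∈ D, ‖1 - ζ‖ < 1 + R := by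
    intro ζ hζ
    calc ‖1 - ζ‖ ≤ ‖(1:ℂ)‖ + ‖ζ‖ := by
          simpa using norm_sub_le (1:ℂ) ζ
      _ < 1 + R := by simp; exact hζ.1
  have hslit : ∀ ζ ∈ D, (1 - ζ) ∈ Complex.slitPlane := by
    intro ζ hζ
    rw [Complex.mem_slitPlane_iff]
    by_contra hcon
    push_neg at hcon
    obtain ⟨hre, him⟩ := hcon
    have h2 : (ζ - 1).arg = 0 := Complex.arg_eq_zero_iff.2 ⟨by
        simp only [Complex.sub_re, Complex.one_re] at hre ⊢; linarith, by
        simp only [Complex.sub_im, Complex.one_im] at him ⊢; linarith⟩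
    have h3 := hζ.2
    rw [h2, abs_zero] at h3; linarith
  -- Part 1 : differentiability
  have hdiff : ∀ z, DifferentiableOn ℂ
      (fun ζ => c z * (1 - ζ) ^ (-(lam z)) + (1 - ζ) ^ (-(lam z)) * g z ζ) D := by
    intro z ζ hζ
    have h1 : DifferentiableAt ℂ (fun ζ : ℂ => (1:ℂ) - ζ) ζ :=
      (differentiableAt_const 1).sub differentiableAt_id
    have hcp : DifferentiableAt ℂ (fun ζ : ℂ => (1 - ζ) ^ (-(lam z))) ζ :=
      h1.cpow (differentiableAt_const _) (hslit ζ hζ)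
    have hgz : DifferentiableAt ℂ (g z) ζ := (hg z ζ hζ).differentiableAt
    exact (((differentiableAt_const (c z)).mul hcp).add (hcp.mul hgz)).differentiableWithinAt
  refine ⟨hdiff, ?_⟩
  rcases isEmpty_or_nonempty K with hK | ⟨⟨z₀⟩⟩
  · exact ⟨1, one_pos, fun z => isEmptyElim z⟩
  -- basic positivity
  have h0D : (0:ℂ) ∈ D := by
    constructor
    · simp; linarith
    · rw [zero_sub, Complex.arg_neg_one, _root_.abs_of_pos Real.pi_pos]; linarith [Real.pi_pos]
  have hL0 : 0 ≤ L := (norm_nonneg _).trans (hlam z₀)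
  have hC₀0 : 0 ≤ C₀ := (norm_nonneg _).trans (hc z₀)
  have hCφ0 : 0 ≤ Cφ := (norm_nonneg _).trans (hφ1 z₀ 0 h0D (by simp; linarith))
  -- membership of path points
  have memD : ∀ (s ψ : ℝ), 0 < s → |ψ| < π/2 + δ →
      ‖1 - (s:ℂ) * Complex.exp (ψ * Complex.I)‖ < R →
      (1 - (s:ℂ) * Complex.exp (ψ * Complex.I)) ∈ D := by
    intro s ψ hs hψ habs
    have hψπ : |ψ| < π := by linarith
    have hu0 : ((s:ℂ) * Complex.exp (ψ * Complex.I)) ≠ 0 := by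
      apply mul_ne_zero
      · exact_mod_cast hs.ne'
      · exact Complex.exp_ne_zero _
    refine ⟨habs, ?_⟩
    have h1 : (1 - (s:ℂ) * Complex.exp (ψ * Complex.I)) - 1
        = -((s:ℂ) * Complex.exp (ψ * Complex.I)) := by ring
    rw [h1, aux_abs_arg_neg hu0, aux_arg_smul_exp hs hψπ]
    linarith
  -- constants
  set E : ℝ := Real.exp (π * (L+1)) with hEdef
  set P : ℝ := (η⁻¹*(1+R)) ^ (L+1) with hPdef
  have hE0 : 0 < E := Real.exp_pos _
  have hB1 : 1 ≤ η⁻¹ * (1+R) := by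
    have h1 : η * η⁻¹ = 1 := mul_inv_cancel₀ hη0.ne'
    nlinarith [inv_pos.2 hη0]
  have hP0 : 0 < P := Real.rpow_pos_of_pos (by linarith) _
  have hinv2 : (2:ℝ) ≤ η⁻¹ := by
    have h1 := inv_anti₀ hη0 hη1.le
    norm_num at h1
    linarith
  -- cpow norm bound
  have hcpowB : ∀ (w : ℂ), η ≤ ‖w‖ → ‖w‖ ≤ 1+R → ∀ (cc : ℂ), ‖cc‖ ≤ L+1 →
      ‖w ^ cc‖ ≤ P * E := by
    intro w hw1 hw2 cc hcc
    have hw0 : w ≠ 0 := by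
      intro h; rw [h] at hw1; simp at hw1; linarith
    calc ‖w ^ cc‖ ≤ ‖w‖ ^ cc.re * E := aux_cpow_norm hw0 hcc
      _ ≤ P * E := by
          apply mul_le_mul_of_nonneg_right _ hE0.le
          apply aux_rpow_le hB1 (by linarith) _ _ ((Complex.abs_re_le_norm cc).trans hcc)
          · nlinarith [mul_le_mul_of_nonneg_right (show (1:ℝ) ≤ η⁻¹ by linarith)
              (show (0:ℝ) ≤ 1+R by linarith)]
          · have h1 : (‖w‖)⁻¹ ≤ η⁻¹ := inv_anti₀ hη0 hw1
            nlinarith [mul_le_mul_of_nonneg_left (show (1:ℝ) ≤ 1+R by linarith)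
              (show (0:ℝ) ≤ η⁻¹ by positivity)]
  have hlam1 : ∀ z, ‖lam z - 1‖ ≤ L + 1 := by
    intro z
    calc ‖lam z - 1‖ ≤ ‖lam z‖ + ‖(1:ℂ)‖ := norm_sub_le _ _
      _ ≤ L + 1 := by rw [norm_one]; linarith [hlam z]
  have hlamneg : ∀ z, ‖-(lam z)‖ ≤ L + 1 := by
    intro z; rw [norm_neg]; linarith [hlam z]
  -- bound for the integrand away from the singularity
  have hfar' : ∀ (z : K) (w : ℂ), w ∈ D → η ≤ ‖1-w‖ →
      ‖(1 - w) ^ (lam z - 1) * φ z w‖ ≤ P*E*Cφ := by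
    intro z w hw hηw
    rw [norm_mul]
    apply mul_le_mul (hcpowB _ hηw (habs1R w hw).le _ (hlam1 z)) (hφ1 z w hw hηw)
      (norm_nonneg _) (by positivity)
  -- mean value estimate along radial segments
  have radial : ∀ (z : K) (ψ a b Mb : ℝ), 0 < a → a ≤ b → |ψ| < π/2 + δ →
      (∀ s ∈ Icc a b, ‖1 - (s:ℂ) * Complex.exp (ψ * Complex.I)‖ < R) →
      (∀ s ∈ Icc a b, ‖((s:ℂ) * Complex.exp (ψ * Complex.I)) ^ (lam z - 1) *
          φ z (1 - (s:ℂ) * Complex.exp (ψ * Complex.I))‖ ≤ Mb) →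
      ‖g z (1 - (b:ℂ) * Complex.exp (ψ * Complex.I))
        - g z (1 - (a:ℂ) * Complex.exp (ψ * Complex.I))‖ ≤ Mb * (b - a) := by
    intro z ψ a b Mb ha hab hψ habs hbnd
    set u : ℂ := Complex.exp ((ψ:ℂ) * Complex.I) with hu
    have hu1 : ‖u‖ = 1 := by
      rw [hu, Complex.norm_exp_ofReal_mul_I]
    have hder : ∀ s ∈ Icc a b, HasDerivWithinAt (fun x : ℝ => g z (1 - (x:ℂ) * u))
        ((((s:ℂ)*u) ^ (lam z - 1) * φ z (1 - (s:ℂ)*u)) * (-u)) (Icc a b) s := by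
      intro s hs
      have hmem : (1 - (s:ℂ)*u) ∈ D := memD s ψ (lt_of_lt_of_le ha hs.1) hψ (habs s hs)
      have inner : HasDerivAt (fun w : ℂ => 1 - w * u) (-u) ((s:ℝ):ℂ) := by
        simpa using ((hasDerivAt_id ((s:ℝ):ℂ)).mul_const u).const_sub 1
      have outer := hg z _ hmem
      have hcomp := (outer.comp ((s:ℝ):ℂ) inner).comp_ofReal
      simp only [Function.comp] at hcomp
      have heq : (1:ℂ) - (1 - (s:ℂ)*u) = (s:ℂ)*u := by ring
      rw [heq] at hcomp
      exact hcomp.hasDerivWithinAt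
    have hbnd' : ∀ s ∈ Ico a b,
        ‖(((s:ℂ)*u) ^ (lam z - 1) * φ z (1 - (s:ℂ)*u)) * (-u)‖ ≤ Mb := by
      intro s hs
      rw [norm_mul, norm_neg, hu1, mul_one]
      exact hbnd s (Ico_subset_Icc_self hs)
    have := norm_image_sub_le_of_norm_deriv_le_segment' hder hbnd' b (right_mem_Icc.2 hab)
    simpa using this
  -- bound for g on the far region
  set Mg : ℝ := (1+R)*(P*E*Cφ)*(1+π) with hMgdef
  have hMg0 : 0 ≤ Mg := by
    have := Real.pi_pos
    positivity
  have gfar : ∀ (z : K), ∀ ζ ∈ D, η ≤ ‖1-ζ‖ → ‖g z ζ‖ ≤ Mg := by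
    intro z ζ hζ hηζ
    set t : ℝ := ‖1-ζ‖ with htdef
    set ψ : ℝ := Complex.arg (1-ζ) with hψdef
    have ht0 : 0 < t := habspos ζ hζ
    have htR : t < 1 + R := habs1R ζ hζ
    have hψb : |ψ| < π/2 + δ := by
      have h1 := hζ.2
      have h2 : ζ - 1 = -(1 - ζ) := by ring
      rw [h2, aux_abs_arg_neg (hne1 ζ hζ)] at h1
      linarith
    have hζeq : (1:ℂ) - (t:ℂ) * Complex.exp ((ψ:ℂ) * Complex.I) = ζ := by
      rw [htdef, hψdef, Complex.norm_mul_exp_arg_mul_I]; ring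
    -- piece 1 : along the real axis from 0 to 1 - t
    have hp1 : ‖g z (1 - (t:ℂ))‖ ≤ (P*E*Cφ) * (1+R) := by
      have hzero : |(0:ℝ)| < π/2 + δ := by simp; linarith
      have hmemb : ∀ s ∈ Icc (min t 1) (max t 1),
          ‖1 - (s:ℂ) * Complex.exp (((0:ℝ):ℂ) * Complex.I)‖ < R := by
        intro s hs
        simp only [Complex.ofReal_zero, zero_mul, Complex.exp_zero, mul_one]
        rw [show (1:ℂ) - (s:ℂ) = ((1 - s : ℝ):ℂ) by push_cast; ring, Complex.norm_real, Real.norm_eq_abs]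
        rcases le_total t 1 with h | h
        · rw [min_eq_left h, max_eq_right h] at hs
          rw [_root_.abs_of_nonneg (by linarith [hs.2])]
          have := hs.1; linarith
        · rw [min_eq_right h, max_eq_left h] at hs
          rw [_root_.abs_of_nonpos (by linarith [hs.1])]
          have := hs.2; linarith
      have hmina : 0 < min t 1 := lt_min ht0 one_pos
      have hbound : ∀ s ∈ Icc (min t 1) (max t 1),
          ‖((s:ℂ) * Complex.exp (((0:ℝ):ℂ) * Complex.I)) ^ (lam z - 1) *
            φ z (1 - (s:ℂ) * Complex.exp (((0:ℝ):ℂ) * Complex.I))‖ ≤ P*E*Cφ := by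
        intro s hs
        have hs0 : 0 < s := lt_of_lt_of_le hmina hs.1
        have hmem : (1 - (s:ℂ) * Complex.exp (((0:ℝ):ℂ) * Complex.I)) ∈ D :=
          memD s 0 hs0 hzero (hmemb s hs)
        have heq : (1:ℂ) - (1 - (s:ℂ) * Complex.exp (((0:ℝ):ℂ) * Complex.I))
            = (s:ℂ) * Complex.exp (((0:ℝ):ℂ) * Complex.I) := by ring
        have hηs : η ≤ ‖1 - (1 - (s:ℂ) * Complex.exp (((0:ℝ):ℂ) * Complex.I))‖ := by
          rw [heq, aux_abs_smul_exp s 0 hs0.le]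
          rcases le_total t 1 with h | h
          · rw [min_eq_left h] at hs; linarith [hs.1]
          · rw [min_eq_right h] at hs; linarith [hs.1]
        have := hfar' z _ hmem hηs
        rwa [heq] at this
      have hres := radial z 0 (min t 1) (max t 1) (P*E*Cφ) hmina (min_le_max) hzero hmemb hbound
      have hgt : ∀ s : ℝ, ((1:ℂ) - (s:ℂ) * Complex.exp (((0:ℝ):ℂ) * Complex.I)) = 1 - (s:ℂ) := by
        intro s; simp
      rcases le_total t 1 with h | h
      · rw [min_eq_left h, max_eq_right h] at hres
        rw [hgt 1, hgt t] at hres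
        simp only [Complex.ofReal_one, sub_self] at hres
        rw [hg0 z, zero_sub, norm_neg] at hres
        calc ‖g z (1 - (t:ℂ))‖ ≤ (P*E*Cφ) * (1 - t) := hres
          _ ≤ (P*E*Cφ) * (1+R) := by
              apply mul_le_mul_of_nonneg_left (by linarith) (by positivity)
      · rw [min_eq_right h, max_eq_left h] at hres
        rw [hgt 1, hgt t] at hres
        simp only [Complex.ofReal_one, sub_self] at hres
        rw [hg0 z, sub_zero] at hres
        calc ‖g z (1 - (t:ℂ))‖ ≤ (P*E*Cφ) * (t - 1) := hres
          _ ≤ (P*E*Cφ) * (1+R) := by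
              apply mul_le_mul_of_nonneg_left (by linarith) (by positivity)
    -- piece 2 : circular arc of radius t from angle 0 to ψ
    have hp2 : ‖g z ζ - g z (1 - (t:ℂ))‖ ≤ (P*E*Cφ) * ((1+R) * π) := by
      have hmemarc : ∀ s : ℝ, |s| ≤ |ψ| → (1 - (t:ℂ) * Complex.exp ((s:ℂ) * Complex.I)) ∈ D := by
        intro s hs
        have hsπ : |s| < π/2 + δ := lt_of_le_of_lt hs hψb
        apply memD t s ht0 hsπ
        have hcos : Real.cos ψ ≤ Real.cos s := by
          rw [← Real.cos_abs s, ← Real.cos_abs ψ]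
          apply Real.cos_le_cos_of_nonneg_of_le_pi (abs_nonneg s) _ hs
          have h1 := Complex.abs_arg_le_pi (1 - ζ)
          rw [← hψdef] at h1
          exact h1
        have h1 := aux_abs_sq t s
        have h2 := aux_abs_sq t ψ
        have h3 : ‖1 - (t:ℂ) * Complex.exp ((ψ:ℂ) * Complex.I)‖ < R := by
          rw [hζeq]; exact hζ.1
        have h4 : (‖1 - (t:ℂ) * Complex.exp ((s:ℂ) * Complex.I)‖)^2 < R^2 := by
          rw [h1]
          have h5 : 2*t*Real.cos ψ ≤ 2*t*Real.cos s :=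
            mul_le_mul_of_nonneg_left hcos (by linarith)
          have h6 : (‖1 - (t:ℂ) * Complex.exp ((ψ:ℂ) * Complex.I)‖)^2 < R^2 := by
            nlinarith [norm_nonneg
              (1 - (t:ℂ) * Complex.exp ((ψ:ℂ) * Complex.I))]
          rw [h2] at h6
          linarith
        exact lt_of_pow_lt_pow_left₀ 2 (by linarith) h4
      -- derivative along arc
      have harcder : ∀ s : ℝ, |s| ≤ |ψ| → HasDerivAt
          (fun x : ℝ => g z (1 - (t:ℂ) * Complex.exp ((x:ℂ) * Complex.I)))
          ((((t:ℂ) * Complex.exp ((s:ℂ) * Complex.I)) ^ (lam z - 1) *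
            φ z (1 - (t:ℂ) * Complex.exp ((s:ℂ) * Complex.I))) *
              (-((t:ℂ) * (Complex.exp ((s:ℂ) * Complex.I) * Complex.I)))) s := by
        intro s hs
        have hmem := hmemarc s hs
        have i1 : HasDerivAt (fun w : ℂ => w * Complex.I) Complex.I ((s:ℝ):ℂ) := by
          simpa using (hasDerivAt_id ((s:ℝ):ℂ)).mul_const Complex.I
        have i2 := Complex.hasDerivAt_exp (((s:ℝ):ℂ) * Complex.I)
        have i3 := i2.comp ((s:ℝ):ℂ) i1
        have i4 : HasDerivAt (fun w : ℂ => 1 - (t:ℂ) * Complex.exp (w * Complex.I))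
            (-((t:ℂ) * (Complex.exp (((s:ℝ):ℂ) * Complex.I) * Complex.I))) ((s:ℝ):ℂ) := by
          have i5 := (i3.const_mul (t:ℂ)).const_sub 1
          simp only [Function.comp] at i5
          exact i5
        have outer := hg z _ hmem
        have hcomp := (outer.comp ((s:ℝ):ℂ) i4).comp_ofReal
        simp only [Function.comp] at hcomp
        have heq : (1:ℂ) - (1 - (t:ℂ) * Complex.exp (((s:ℝ):ℂ) * Complex.I))
            = (t:ℂ) * Complex.exp (((s:ℝ):ℂ) * Complex.I) := by ring
        rw [heq] at hcomp
        exact hcomp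
      have harcbnd : ∀ s : ℝ, |s| ≤ |ψ| →
          ‖(((t:ℂ) * Complex.exp ((s:ℂ) * Complex.I)) ^ (lam z - 1) *
            φ z (1 - (t:ℂ) * Complex.exp ((s:ℂ) * Complex.I))) *
              (-((t:ℂ) * (Complex.exp ((s:ℂ) * Complex.I) * Complex.I)))‖
            ≤ (P*E*Cφ) * (1+R) := by
        intro s hs
        have hmem := hmemarc s hs
        have heq : (1:ℂ) - (1 - (t:ℂ) * Complex.exp ((s:ℂ) * Complex.I))
            = (t:ℂ) * Complex.exp ((s:ℂ) * Complex.I) := by ring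
        have hηs : η ≤ ‖1 - (1 - (t:ℂ) * Complex.exp ((s:ℂ) * Complex.I))‖ := by
          rw [heq, aux_abs_smul_exp t s ht0.le]; exact hηζ
        have h1 := hfar' z _ hmem hηs
        rw [heq] at h1
        rw [norm_mul]
        have h2 : ‖-((t:ℂ) * (Complex.exp ((s:ℂ) * Complex.I) * Complex.I))‖ = t := by
          rw [norm_neg, norm_mul, norm_mul,
            Complex.norm_real, Real.norm_eq_abs, Complex.norm_exp_ofReal_mul_I, Complex.norm_I,
            _root_.abs_of_nonneg ht0.le]
          ring
        rw [h2]
        exact mul_le_mul h1 (by linarith) ht0.le (by positivity)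
      -- apply the segment mean value inequality on [0,ψ] or [ψ,0]
      have harc : ‖g z (1 - (t:ℂ) * Complex.exp ((ψ:ℂ) * Complex.I))
          - g z (1 - (t:ℂ) * Complex.exp (((0:ℝ):ℂ) * Complex.I))‖
            ≤ ((P*E*Cφ) * (1+R)) * |ψ| := by
        rcases le_total 0 ψ with h | h
        · have hres := norm_image_sub_le_of_norm_deriv_le_segment'
            (f := fun x : ℝ => g z (1 - (t:ℂ) * Complex.exp ((x:ℂ) * Complex.I)))
            (f' := fun s : ℝ => (((t:ℂ) * Complex.exp ((s:ℂ) * Complex.I)) ^ (lam z - 1) *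
              φ z (1 - (t:ℂ) * Complex.exp ((s:ℂ) * Complex.I))) *
                (-((t:ℂ) * (Complex.exp ((s:ℂ) * Complex.I) * Complex.I))))
            (a := 0) (b := ψ) (C := (P*E*Cφ) * (1+R))
            (fun s hs => (harcder s (by
              rw [_root_.abs_of_nonneg hs.1, _root_.abs_of_nonneg h]; exact hs.2)).hasDerivWithinAt)
            (fun s hs => harcbnd s (by
              rw [_root_.abs_of_nonneg hs.1, _root_.abs_of_nonneg h]; exact hs.2.le))
            ψ (right_mem_Icc.2 h)
          rw [_root_.abs_of_nonneg h]
          simpa using hres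
        · have hres := norm_image_sub_le_of_norm_deriv_le_segment'
            (f := fun x : ℝ => g z (1 - (t:ℂ) * Complex.exp ((x:ℂ) * Complex.I)))
            (f' := fun s : ℝ => (((t:ℂ) * Complex.exp ((s:ℂ) * Complex.I)) ^ (lam z - 1) *
              φ z (1 - (t:ℂ) * Complex.exp ((s:ℂ) * Complex.I))) *
                (-((t:ℂ) * (Complex.exp ((s:ℂ) * Complex.I) * Complex.I))))
            (a := ψ) (b := 0) (C := (P*E*Cφ) * (1+R))
            (fun s hs => (harcder s (by
              rw [_root_.abs_of_nonpos hs.2, _root_.abs_of_nonpos h]; linarith [hs.1])).hasDerivWithinAt)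
            (fun s hs => harcbnd s (by
              rw [_root_.abs_of_nonpos hs.2.le, _root_.abs_of_nonpos h]; linarith [hs.1]))
            0 (right_mem_Icc.2 h)
          rw [_root_.abs_of_nonpos h, ← norm_neg]
          have h2 : -(g z (1 - (t:ℂ) * Complex.exp ((ψ:ℂ) * Complex.I))
              - g z (1 - (t:ℂ) * Complex.exp (((0:ℝ):ℂ) * Complex.I)))
              = g z (1 - (t:ℂ) * Complex.exp (((0:ℝ):ℂ) * Complex.I))
              - g z (1 - (t:ℂ) * Complex.exp ((ψ:ℂ) * Complex.I)) := by ring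
          rw [h2]
          simpa using hres
      have h0eq : (1:ℂ) - (t:ℂ) * Complex.exp (((0:ℝ):ℂ) * Complex.I) = 1 - (t:ℂ) := by simp
      rw [hζeq, h0eq] at harc
      calc ‖g z ζ - g z (1 - (t:ℂ))‖ ≤ ((P*E*Cφ) * (1+R)) * |ψ| := harc
        _ ≤ (P*E*Cφ) * ((1+R) * π) := by
            rw [mul_assoc]
            apply mul_le_mul_of_nonneg_left _ (by positivity)
            apply mul_le_mul_of_nonneg_left _ (by linarith)
            have h1 : |ψ| ≤ π := by rw [hψdef]; exact Complex.abs_arg_le_pi _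
            exact h1
    calc ‖g z ζ‖ = ‖(g z ζ - g z (1 - (t:ℂ))) + g z (1 - (t:ℂ))‖ := by
          congr 1; ring
      _ ≤ ‖g z ζ - g z (1 - (t:ℂ))‖ + ‖g z (1 - (t:ℂ))‖ := norm_add_le _ _
      _ ≤ (P*E*Cφ) * ((1+R) * π) + (P*E*Cφ) * (1+R) := add_le_add hp2 hp1
      _ = Mg := by rw [hMgdef]; ring
    -- final constants
  set Cf : ℝ := P*E*(C₀+Mg) with hCfdef
  set Cn : ℝ := E*(C₀+Mg) * (Real.log 2)^(-(d+1)) + E*(E*Cφ/(d+1)) with hCndef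
  have hCf0 : 0 ≤ Cf := by positivity
  have hlog2 : 0 < Real.log 2 := Real.log_pos one_lt_two
  have hCn0 : 0 ≤ Cn := by positivity
  refine ⟨max Cf Cn + 1, by nlinarith [le_max_left Cf Cn], ?_⟩
  intro z ζ hζ
  have hr0 : 0 < ‖1 - ζ‖ := habspos ζ hζ
  have hΨ : ‖c z * (1 - ζ) ^ (-(lam z)) + (1 - ζ) ^ (-(lam z)) * g z ζ‖
      ≤ ‖(1 - ζ) ^ (-(lam z))‖ * (C₀ + ‖g z ζ‖) := by
    calc ‖c z * (1 - ζ) ^ (-(lam z)) + (1 - ζ) ^ (-(lam z)) * g z ζ‖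
        ≤ ‖c z * (1 - ζ) ^ (-(lam z))‖ + ‖(1 - ζ) ^ (-(lam z)) * g z ζ‖ := norm_add_le _ _
      _ = ‖c z‖ * ‖(1 - ζ) ^ (-(lam z))‖ + ‖(1 - ζ) ^ (-(lam z))‖ * ‖g z ζ‖ := by
          rw [norm_mul, norm_mul]
      _ ≤ C₀ * ‖(1 - ζ) ^ (-(lam z))‖ + ‖(1 - ζ) ^ (-(lam z))‖ * ‖g z ζ‖ := by
          have := hc z
          gcongr
      _ = ‖(1 - ζ) ^ (-(lam z))‖ * (C₀ + ‖g z ζ‖) := by ring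
  constructor
  · -- far region
    intro hηζ
    have h1 : ‖(1 - ζ) ^ (-(lam z))‖ ≤ P*E := hcpowB _ hηζ (habs1R ζ hζ).le _ (hlamneg z)
    have h2 : ‖g z ζ‖ ≤ Mg := gfar z ζ hζ hηζ
    calc ‖c z * (1 - ζ) ^ (-(lam z)) + (1 - ζ) ^ (-(lam z)) * g z ζ‖
        ≤ ‖(1 - ζ) ^ (-(lam z))‖ * (C₀ + ‖g z ζ‖) := hΨ
      _ ≤ (P*E)*(C₀+Mg) := by
          apply mul_le_mul h1 (by linarith) (by positivity) (by positivity)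
      _ = Cf := by rw [hCfdef]
      _ ≤ max Cf Cn + 1 := by nlinarith [le_max_left Cf Cn]
  · -- near region
    intro hζη
    set r : ℝ := ‖1 - ζ‖ with hrdef
    have hr1 : r < 1 := lt_of_le_of_lt hζη (by linarith)
    have hlogr : Real.log r < 0 := Real.log_neg hr0 hr1
    rw [_root_.abs_of_neg hlogr]
    set ψ : ℝ := Complex.arg (1 - ζ) with hψdef
    have hψb : |ψ| < π/2 + δ := by
      have h1 := hζ.2
      have h2 : ζ - 1 = -(1 - ζ) := by ring
      rw [h2, aux_abs_arg_neg (hne1 ζ hζ)] at h1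
      linarith
    set u : ℂ := Complex.exp ((ψ:ℂ) * Complex.I) with hudef
    have hu1' : ‖u‖ = 1 := by
      rw [hudef, Complex.norm_exp_ofReal_mul_I]
    have hζeq : (1:ℂ) - (r:ℂ) * u = ζ := by
      rw [hudef, hrdef, hψdef, Complex.norm_mul_exp_arg_mul_I]; ring
    have habssu : ∀ s : ℝ, 0 ≤ s → ‖(s:ℂ)*u‖ = s := fun s hs =>
      aux_abs_smul_exp s ψ hs
    have hmemnear : ∀ s : ℝ, 0 < s → s ≤ η → ((1:ℂ) - (s:ℂ)*u) ∈ D := by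
      intro s hs1 hs2
      apply memD s ψ hs1 hψb
      calc ‖1 - (s:ℂ)*u‖ ≤ ‖(1:ℂ)‖ + ‖(s:ℂ)*u‖ := by
            simpa using norm_sub_le (1:ℂ) ((s:ℂ)*u)
        _ = 1 + s := by rw [habssu s hs1.le]; simp
        _ < R := by linarith
    set m : ℝ := min ((lam z).re - α) 0 with hmdef
    have hrm0 : 0 < r ^ m := Real.rpow_pos_of_pos hr0 _
    set KK : ℝ := E*Cφ*(r ^ m) with hKKdef
    have hKK0 : 0 ≤ KK := by positivity
    have hder : ∀ s : ℝ, 0 < s → s ≤ η → HasDerivAt (fun x : ℝ => g z (1 - (x:ℂ) * u))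
        ((((s:ℂ)*u) ^ (lam z - 1) * φ z (1 - (s:ℂ)*u)) * (-u)) s := by
      intro s hs1 hs2
      have hmem := hmemnear s hs1 hs2
      have inner : HasDerivAt (fun w : ℂ => 1 - w * u) (-u) ((s:ℝ):ℂ) := by
        simpa using ((hasDerivAt_id ((s:ℝ):ℂ)).mul_const u).const_sub 1
      have hcomp := ((hg z _ hmem).comp ((s:ℝ):ℂ) inner).comp_ofReal
      simp only [Function.comp] at hcomp
      have heq : (1:ℂ) - (1 - (s:ℂ)*u) = (s:ℂ)*u := by ring
      rw [heq] at hcomp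
      exact hcomp
    have hdbnd : ∀ s : ℝ, 0 < s → s ≤ η → r ≤ s →
        ‖(((s:ℂ)*u) ^ (lam z - 1) * φ z (1 - (s:ℂ)*u)) * (-u)‖
          ≤ KK * (s⁻¹ * (-Real.log s)^d) := by
      intro s hs1 hs2 hs3
      have hs4 : s < 1 := by linarith
      have hmem := hmemnear s hs1 hs2
      have hlogs : Real.log s < 0 := Real.log_neg hs1 hs4
      have hsu0 : ((s:ℂ)*u) ≠ 0 := by
        intro hcon
        have h5 := habssu s hs1.le
        rw [hcon] at h5
        simp at h5
        linarith
      have h1 : ‖((s:ℂ)*u) ^ (lam z - 1)‖ ≤ s ^ ((lam z).re - 1) * E := by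
        have h6 := aux_cpow_norm hsu0 (hlam1 z)
        rw [habssu s hs1.le] at h6
        have hre : (lam z - 1).re = (lam z).re - 1 := by simp [Complex.sub_re]
        rwa [hre] at h6
      have hφb : ‖φ z (1 - (s:ℂ)*u)‖ ≤ Cφ * s ^ (-α) * (-Real.log s)^d := by
        have heq : (1:ℂ) - (1 - (s:ℂ)*u) = (s:ℂ)*u := by ring
        have h2 := hφ2 z _ hmem (by rw [heq, habssu s hs1.le]; exact hs2)
        rw [heq, habssu s hs1.le] at h2
        rwa [_root_.abs_of_neg hlogs] at h2
      rw [norm_mul, norm_neg, hu1', mul_one, norm_mul]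
      calc ‖((s:ℂ)*u) ^ (lam z - 1)‖ * ‖φ z (1 - (s:ℂ)*u)‖
          ≤ (s ^ ((lam z).re - 1) * E) * (Cφ * s ^ (-α) * (-Real.log s)^d) := by
            apply mul_le_mul h1 hφb (norm_nonneg _) (by positivity)
        _ = (E*Cφ) * ((s ^ ((lam z).re - 1) * s ^ (-α)) * (-Real.log s)^d) := by ring
        _ ≤ (E*Cφ) * ((r ^ m * s⁻¹) * (-Real.log s)^d) := by
            apply mul_le_mul_of_nonneg_left _ (by positivity)
            apply mul_le_mul_of_nonneg_right _ (Real.rpow_nonneg (by linarith) d)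
            have e1 : s ^ ((lam z).re - 1) * s ^ (-α)
                = s ^ ((lam z).re - α) * s ^ (-1 : ℝ) := by
              rw [← Real.rpow_add hs1, ← Real.rpow_add hs1]; ring_nf
            rw [e1, Real.rpow_neg_one]
            apply mul_le_mul_of_nonneg_right _ (by positivity)
            rcases le_total 0 ((lam z).re - α) with hβ | hβ
            · rw [hmdef, min_eq_right hβ, Real.rpow_zero]
              exact Real.rpow_le_one hs1.le hs4.le hβ
            · rw [hmdef, min_eq_left hβ]
              have e2 : ∀ x : ℝ, 0 < x → x ^ ((lam z).re - α)
                  = (x⁻¹) ^ (-((lam z).re - α)) := by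
                intro x hx
                rw [Real.inv_rpow hx.le, ← Real.rpow_neg hx.le, neg_neg]
              rw [e2 s hs1, e2 r hr0]
              exact Real.rpow_le_rpow (by positivity) (inv_anti₀ hr0 hs3) (by linarith)
        _ = KK * (s⁻¹ * (-Real.log s)^d) := by rw [hKKdef]; ring
    -- apply the fencing lemma on [r, η]
    have hd1 : (0:ℝ) < d + 1 := by linarith
    have hfcont : ContinuousOn (fun x : ℝ => g z (1 - (x:ℂ)*u) - g z ζ) (Icc r η) := by
      intro s hs
      have hs1 : 0 < s := lt_of_lt_of_le hr0 hs.1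
      exact (((hder s hs1 hs.2).continuousAt).sub continuousAt_const).continuousWithinAt
    have hBcont : ContinuousOn
        (fun x : ℝ => KK/(d+1) * ((-Real.log r)^(d+1) - (-Real.log x)^(d+1))) (Icc r η) := by
      apply ContinuousOn.mul continuousOn_const
      apply ContinuousOn.sub continuousOn_const
      apply ContinuousOn.rpow_const
      · exact (Real.continuousOn_log.mono (fun x hx =>
          (lt_of_lt_of_le hr0 hx.1).ne')).neg
      · intro x hx; right; linarith
    have hBder : ∀ s ∈ Ico r η, HasDerivWithinAt
        (fun x : ℝ => KK/(d+1) * ((-Real.log r)^(d+1) - (-Real.log x)^(d+1)))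
        (KK * (s⁻¹ * (-Real.log s)^d)) (Ici s) s := by
      intro s hs
      have hs1 : 0 < s := lt_of_lt_of_le hr0 hs.1
      have hs4 : s < 1 := by linarith [hs.2]
      have hlogs : 0 < -Real.log s := by
        have := Real.log_neg hs1 hs4; linarith
      have d1 : HasDerivAt (fun x : ℝ => -Real.log x) (-s⁻¹) s :=
        (Real.hasDerivAt_log hs1.ne').neg
      have d2 : HasDerivAt (fun y : ℝ => y ^ (d+1)) ((d+1) * (-Real.log s) ^ d)
          (-Real.log s) := by
        have h6 := Real.hasDerivAt_rpow_const (x := -Real.log s) (p := d+1)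
          (Or.inl hlogs.ne')
        simpa [add_sub_cancel_right] using h6
      have d3 := d2.comp s d1
      simp only [Function.comp_def] at d3
      have d4 : HasDerivAt
          (fun x : ℝ => KK/(d+1) * ((-Real.log r)^(d+1) - (-Real.log x)^(d+1)))
          (KK/(d+1) * (0 - ((d+1) * (-Real.log s)^d * (-s⁻¹)))) s := by
        apply HasDerivAt.const_mul
        simpa using d3.const_sub ((-Real.log r)^(d+1))
      have e3 : KK/(d+1) * (0 - ((d+1) * (-Real.log s)^d * (-s⁻¹)))
          = KK * (s⁻¹ * (-Real.log s)^d) := by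
        field_simp
        ring
      rw [e3] at d4
      exact d4.hasDerivWithinAt
    have ha0 : ‖g z (1 - (r:ℂ)*u) - g z ζ‖
        ≤ KK/(d+1) * ((-Real.log r)^(d+1) - (-Real.log r)^(d+1)) := by
      rw [hζeq]; simp
    have happ := image_norm_le_of_norm_deriv_right_le_deriv_boundary' hfcont
      (fun s hs => (((hder s (lt_of_lt_of_le hr0 hs.1) hs.2.le).sub_const
        (g z ζ)).hasDerivWithinAt).mono (Ici_subset_Ici.mpr le_rfl))
      ha0 hBcont hBder
      (fun s hs => hdbnd s (lt_of_lt_of_le hr0 hs.1) hs.2.le hs.1)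
      (right_mem_Icc.2 hζη)
    have hηlog : (0:ℝ) ≤ (-Real.log η)^(d+1) := by
      apply Real.rpow_nonneg
      have := Real.log_neg hη0 (by linarith : η < 1); linarith
    have hgdiff : ‖g z (1 - (η:ℂ)*u) - g z ζ‖ ≤ KK/(d+1) * (-Real.log r)^(d+1) := by
      refine le_trans happ ?_
      apply mul_le_mul_of_nonneg_left _ (by positivity)
      linarith
    have hζ'mem := hmemnear η hη0 le_rfl
    have hgζ' : ‖g z (1 - (η:ℂ)*u)‖ ≤ Mg := by
      apply gfar z _ hζ'mem
      have heq : (1:ℂ) - (1 - (η:ℂ)*u) = (η:ℂ)*u := by ring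
      rw [heq, habssu η hη0.le]
    have hgnear : ‖g z ζ‖ ≤ Mg + KK/(d+1) * (-Real.log r)^(d+1) := by
      calc ‖g z ζ‖ = ‖g z (1 - (η:ℂ)*u) - (g z (1 - (η:ℂ)*u) - g z ζ)‖ := by
            congr 1; ring
        _ ≤ ‖g z (1 - (η:ℂ)*u)‖ + ‖g z (1 - (η:ℂ)*u) - g z ζ‖ := norm_sub_le _ _
        _ ≤ Mg + KK/(d+1) * (-Real.log r)^(d+1) := add_le_add hgζ' hgdiff
    -- assembly
    have hpowZ : ‖(1 - ζ)^(-(lam z))‖ ≤ r ^ (-(lam z).re) * E := by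
      have h6 := aux_cpow_norm (hne1 ζ hζ) (hlamneg z)
      rwa [Complex.neg_re] at h6
    have hexp1 : r ^ (-(lam z).re) ≤ r ^ (-(max α (lam z).re)) :=
      Real.rpow_le_rpow_of_exponent_ge hr0 hr1.le (neg_le_neg (le_max_right _ _))
    have hexp2 : r ^ (-(lam z).re) * r ^ m = r ^ (-(max α (lam z).re)) := by
      rw [← Real.rpow_add hr0]
      congr 1
      rcases le_total α ((lam z).re) with h | h
      · rw [hmdef, min_eq_right (by linarith), max_eq_right h]; ring
      · rw [hmdef, min_eq_left (by linarith), max_eq_left h]; ring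
    have hlog2r : Real.log 2 ≤ -Real.log r := by
      have h6 : Real.log r ≤ Real.log (1/2) :=
        (Real.log_le_log_iff hr0 (by norm_num)).2 (by linarith)
      have h7 : Real.log (1/2) = -Real.log 2 := by
        rw [one_div, Real.log_inv]
      linarith
    have hlogpow : (Real.log 2)^(d+1) ≤ (-Real.log r)^(d+1) :=
      Real.rpow_le_rpow hlog2.le hlog2r (by linarith)
    have h9 : (1:ℝ) ≤ (Real.log 2)^(-(d+1)) * (-Real.log r)^(d+1) := by
      rw [Real.rpow_neg hlog2.le]
      rw [← div_eq_inv_mul, le_div_iff₀ (Real.rpow_pos_of_pos hlog2 _)]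
      simpa using hlogpow
    calc ‖c z * (1 - ζ) ^ (-(lam z)) + (1 - ζ) ^ (-(lam z)) * g z ζ‖
        ≤ ‖(1 - ζ) ^ (-(lam z))‖ * (C₀ + ‖g z ζ‖) := hΨ
      _ ≤ (r ^ (-(lam z).re) * E) * (C₀ + (Mg + KK/(d+1) * (-Real.log r)^(d+1))) := by
          apply mul_le_mul hpowZ (by linarith) (by positivity) (by positivity)
      _ = E*(C₀+Mg) * r ^ (-(lam z).re)
          + (E*(E*Cφ/(d+1))) * (r ^ (-(lam z).re) * r ^ m) * (-Real.log r)^(d+1) := by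
          rw [hKKdef]; ring
      _ ≤ E*(C₀+Mg) * r ^ (-(max α (lam z).re))
          + (E*(E*Cφ/(d+1))) * r ^ (-(max α (lam z).re)) * (-Real.log r)^(d+1) := by
          rw [hexp2]
          apply add_le_add _ le_rfl
          exact mul_le_mul_of_nonneg_left hexp1 (by positivity)
      _ ≤ (E*(C₀+Mg) * (Real.log 2)^(-(d+1))) * r ^ (-(max α (lam z).re)) * (-Real.log r)^(d+1)
          + (E*(E*Cφ/(d+1))) * r ^ (-(max α (lam z).re)) * (-Real.log r)^(d+1) := by
          apply add_le_add _ le_rfl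
          have h10 : E*(C₀+Mg) * r ^ (-(max α (lam z).re))
              = (E*(C₀+Mg) * r ^ (-(max α (lam z).re))) * 1 := by ring
          rw [h10]
          calc (E*(C₀+Mg) * r ^ (-(max α (lam z).re))) * 1
              ≤ (E*(C₀+Mg) * r ^ (-(max α (lam z).re)))
                * ((Real.log 2)^(-(d+1)) * (-Real.log r)^(d+1)) := by
                apply mul_le_mul_of_nonneg_left h9 (by positivity)
            _ = (E*(C₀+Mg) * (Real.log 2)^(-(d+1))) * r ^ (-(max α (lam z).re))
                * (-Real.log r)^(d+1) := by ring
      _ = Cn * r ^ (-(max α (lam z).re)) * (-Real.log r)^(d+1) := by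
          rw [hCndef]; ring
      _ ≤ (max Cf Cn + 1) * r ^ (-(max α (lam z).re)) * (-Real.log r)^(d+1) := by
          apply mul_le_mul_of_nonneg_right _ (Real.rpow_nonneg (by linarith) _)
          apply mul_le_mul_of_nonneg_right _ (by positivity)
          nlinarith [le_max_right Cf Cn]
end
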